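/- arXiv:2108.05279 — 3 statements merged into one kernel-verified Lean document; each statement's English description precedes it below -/
import Mathlib

section
/- If B₁, B₂ ⊆ ℝ are disjoint bounded intervals, then E[N(B₁) N(B₂)] = n²λ²μ² Q_σ([0,1],B₁) Q_σ([0,1],B₂) + nλμ² Q_σ²([0,1],B₁,B₂) = E[N(B₁)] E[N(B₂)] + nλμ² Q_σ²([0,1],B₁,B₂), where E[N(B)] = nλμ Q_σ([0,1],B). -/
open MeasureTheory Filter Set

noncomputable section

/-- Rescaled dispersal density `f_σ(z) = σ⁻¹ f(z/σ)`. -/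
def fdil (σ : ℝ) (f : ℝ → ℝ) (z : ℝ) : ℝ := σ⁻¹ * f (z / σ)

/-- The dispersal point-process model of Hoffmann–Trabs: `M` is a homogeneous Poisson
point process on `[0,1]` with intensity `n·λ·dx` and, conditionally on `M`, `N` is a Cox
point process on `ℝ` with intensity `μ (M ∗ f_σ)(y) dy`.  The joint law is characterized
through the joint Laplace functional (Campbell's formula). -/
structure IsDispersalModel {Ω : Type*} [MeasurableSpace Ω] (P : Measure Ω)
    (n : ℕ) (lam mu σ : ℝ) (f : ℝ → ℝ) (M N : Ω → Measure ℝ) : Prop where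
  prob : IsProbabilityMeasure P
  lam_pos : 0 < lam
  mu_pos : 0 < mu
  sigma_pos : 0 < σ
  sigma_le_one : σ ≤ 1
  f_meas : Measurable f
  f_nonneg : ∀ z, 0 ≤ f z
  f_prob : ∫ z, f z = 1
  M_meas : ∀ A : Set ℝ, MeasurableSet A → Measurable fun ω => M ω A
  N_meas : ∀ B : Set ℝ, MeasurableSet B → Measurable fun ω => N ω B
  M_carrier : ∀ ω, M ω (Set.Icc (0:ℝ) 1)ᶜ = 0
  M_finite : ∀ ω, IsFiniteMeasure (M ω)
  N_locFinite : ∀ ω (B : Set ℝ), Bornology.IsBounded B → N ω B < ⊤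
  laplace : ∀ g h : ℝ → ℝ, Measurable g → Measurable h →
    (∃ c, ∀ x, |g x| ≤ c) → (∃ c, ∀ y, |h y| ≤ c) →
    (∃ R, ∀ y : ℝ, R < |y| → h y = 0) →
    ∫ ω, Real.exp ((∫ x, g x ∂(M ω)) + ∫ y, h y ∂(N ω)) ∂P
      = Real.exp ((n : ℝ) * lam * ∫ x in Set.Icc (0:ℝ) 1,
          (Real.exp (g x + mu * ∫ y, (Real.exp (h y) - 1) * fdil σ f (y - x)) - 1))

/-- `Q_σ(A,B) = ∫_A ∫_B f_σ(y−x) dy dx`. -/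
def Qker (σ : ℝ) (f : ℝ → ℝ) (A B : Set ℝ) : ℝ := ∫ x in A, ∫ y in B, fdil σ f (y - x)

/-- `Q²_σ(A,B₁,B₂) = ∫_A ∫_{B₁} ∫_{B₂} f_σ(y₁−x) f_σ(y₂−x) dy₂ dy₁ dx`. -/
def Q2ker (σ : ℝ) (f : ℝ → ℝ) (A B₁ B₂ : Set ℝ) : ℝ :=
  ∫ x in A, ∫ y₁ in B₁, ∫ y₂ in B₂, fdil σ f (y₁ - x) * fdil σ f (y₂ - x)

end


namespace DispersalAux

lemma exp_slope : Tendsto (fun v : ℝ => (Real.exp v - 1) / v) (nhdsWithin 0 {0}ᶜ) (nhds 1) := by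
  have h := (Real.hasDerivAt_exp 0)
  rw [hasDerivAt_iff_tendsto_slope] at h
  simpa [slope_fun_def, Real.exp_zero, sub_zero, div_eq_inv_mul] using h

lemma uk_ne (k : ℕ) (hk : 1 ≤ k) : Real.exp (-1 / (k:ℝ)) - 1 ≠ 0 := by
  have hk0 : (0:ℝ) < (k:ℝ) := by positivity
  have : Real.exp (-1 / (k:ℝ)) ≠ 1 := by
    rw [Ne, Real.exp_eq_one_iff, div_eq_zero_iff]
    rintro (h | h)
    · norm_num at h
    · exact absurd h (by positivity)
  intro h'; exact this (by linarith)

lemma uk_tendsto : Tendsto (fun k : ℕ => Real.exp (-1 / (k:ℝ)) - 1) atTop (nhds 0) := by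
  have : Tendsto (fun k : ℕ => -1 / (k:ℝ)) atTop (nhds 0) := by
    simpa using (tendsto_const_div_atTop_nhds_zero_nat (-1))
  have := (Real.continuous_exp.tendsto 0).comp this
  simpa using this.sub_const 1

/-- `k * u_k → -1` where `u_k = exp(-1/k) - 1`. -/
lemma kuk_tendsto : Tendsto (fun k : ℕ => (k : ℝ) * (Real.exp (-1 / (k:ℝ)) - 1)) atTop (nhds (-1)) := by
  have hv : Tendsto (fun k : ℕ => -1 / (k:ℝ)) atTop (nhdsWithin 0 {0}ᶜ) := by
    apply tendsto_nhdsWithin_of_tendsto_nhds_of_eventually_within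
    · simpa using (tendsto_const_div_atTop_nhds_zero_nat (-1))
    · filter_upwards [eventually_ge_atTop 1] with k hk
      have : (k:ℝ) ≠ 0 := by positivity
      simp [div_eq_zero_iff, this]
  have h := (exp_slope.comp hv).mul_const (-1)
  have heq : ∀ᶠ k : ℕ in atTop,
      ((fun v : ℝ => (Real.exp v - 1) / v) ∘ fun k : ℕ => -1 / (k:ℝ)) k * (-1)
        = (k : ℝ) * (Real.exp (-1 / (k:ℝ)) - 1) := by
    filter_upwards [eventually_ge_atTop 1] with k hk
    have hk0 : (k:ℝ) ≠ 0 := by positivity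
    simp only [Function.comp_apply]
    field_simp
  simpa using h.congr' heq

/-- `k * (exp(u_k * a) - 1) → -a`. -/
lemma scalar_lim (a : ℝ) (ha : a ≠ 0) :
    Tendsto (fun k : ℕ => (k : ℝ) * (Real.exp ((Real.exp (-1 / (k:ℝ)) - 1) * a) - 1))
      atTop (nhds (-a)) := by
  have hw : Tendsto (fun k : ℕ => (Real.exp (-1 / (k:ℝ)) - 1) * a) atTop (nhdsWithin 0 {0}ᶜ) := by
    apply tendsto_nhdsWithin_of_tendsto_nhds_of_eventually_within
    · simpa using uk_tendsto.mul_const a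
    · filter_upwards [eventually_ge_atTop 1] with k hk
      simp [mul_ne_zero (uk_ne k hk) ha]
  have h1 := (exp_slope.comp hw).mul kuk_tendsto
  have h2 := h1.mul_const a
  have heq : ∀ᶠ k : ℕ in atTop,
      (((fun v : ℝ => (Real.exp v - 1) / v) ∘ fun k : ℕ => (Real.exp (-1 / (k:ℝ)) - 1) * a) k
        * ((k : ℝ) * (Real.exp (-1 / (k:ℝ)) - 1))) * a
        = (k : ℝ) * (Real.exp ((Real.exp (-1 / (k:ℝ)) - 1) * a) - 1) := by
    filter_upwards [eventually_ge_atTop 1] with k hk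
    have hu := uk_ne k hk
    simp only [Function.comp_apply]
    rw [div_mul_eq_mul_div, div_mul_eq_mul_div, div_eq_iff (mul_ne_zero hu ha)]
    ring
  have := h2.congr' heq
  simpa [mul_comm] using this

lemma scalar_lim' (a : ℝ) (ha : 0 ≤ a) :
    Tendsto (fun k : ℕ => (k : ℝ) * (Real.exp ((Real.exp (-1 / (k:ℝ)) - 1) * a) - 1))
      atTop (nhds (-a)) := by
  rcases eq_or_ne a 0 with rfl | h
  · simpa using tendsto_const_nhds (x := (0:ℝ)) (f := atTop (α := ℕ))
  · exact scalar_lim a h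



lemma kuk_le_one (k : ℕ) : (k:ℝ) * (1 - Real.exp (-1 / (k:ℝ))) ≤ 1 := by
  rcases Nat.eq_zero_or_pos k with rfl | hk
  · norm_num
  · have hk0 : (0:ℝ) < (k:ℝ) := by positivity
    have h := Real.add_one_le_exp (-1 / (k:ℝ))
    have hring : (-1:ℝ) / (k:ℝ) = -(1 / (k:ℝ)) := by ring
    have h2 : 1 - Real.exp (-1 / (k:ℝ)) ≤ 1 / (k:ℝ) := by
      rw [hring] at h ⊢; linarith
    calc (k:ℝ) * (1 - Real.exp (-1 / (k:ℝ))) ≤ (k:ℝ) * (1 / (k:ℝ)) :=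
          mul_le_mul_of_nonneg_left h2 (le_of_lt hk0)
      _ = 1 := by field_simp

lemma uk_nonpos (k : ℕ) : Real.exp (-1 / (k:ℝ)) - 1 ≤ 0 := by
  have h : (-1:ℝ) / (k:ℝ) ≤ 0 := div_nonpos_of_nonpos_of_nonneg (by norm_num) (Nat.cast_nonneg k)
  have := Real.exp_le_one_iff.mpr h
  linarith

/-- `|k * (exp(u_k * a) - 1)| ≤ a` for `a ≥ 0`. -/
lemma bnd1 (k : ℕ) {a : ℝ} (ha : 0 ≤ a) :
    |(k:ℝ) * (Real.exp ((Real.exp (-1 / (k:ℝ)) - 1) * a) - 1)| ≤ a := by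
  set u := Real.exp (-1 / (k:ℝ)) - 1 with hu
  have hu0 : u ≤ 0 := uk_nonpos k
  have hw : u * a ≤ 0 := mul_nonpos_of_nonpos_of_nonneg hu0 ha
  have h1 : Real.exp (u * a) ≤ 1 := Real.exp_le_one_iff.mpr hw
  have h2 : 1 - Real.exp (u * a) ≤ -(u * a) := by
    have := Real.add_one_le_exp (u * a); linarith
  have hk0 : (0:ℝ) ≤ (k:ℝ) := Nat.cast_nonneg k
  have habs : |(k:ℝ) * (Real.exp (u * a) - 1)| = (k:ℝ) * (1 - Real.exp (u * a)) := by
    rw [abs_of_nonpos (mul_nonpos_of_nonneg_of_nonpos hk0 (by linarith))]; ring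
  rw [habs]
  calc (k:ℝ) * (1 - Real.exp (u * a)) ≤ (k:ℝ) * (-(u * a)) :=
        mul_le_mul_of_nonneg_left h2 hk0
    _ = ((k:ℝ) * (1 - Real.exp (-1 / (k:ℝ)))) * a := by rw [hu]; ring
    _ ≤ 1 * a := mul_le_mul_of_nonneg_right (kuk_le_one k) ha
    _ = a := one_mul a

/-- `0 ≤ k * (1 - exp(-(x/k))) ≤ x` for `x ≥ 0`. -/
lemma approx_nonneg (k : ℕ) {x : ℝ} (hx : 0 ≤ x) :
    0 ≤ (k:ℝ) * (1 - Real.exp (-(x / (k:ℝ)))) := by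
  have hk0 : (0:ℝ) ≤ (k:ℝ) := Nat.cast_nonneg k
  have : -(x / (k:ℝ)) ≤ 0 := by
    have : 0 ≤ x / (k:ℝ) := div_nonneg hx hk0
    linarith
  have := Real.exp_le_one_iff.mpr this
  have h1 : 0 ≤ 1 - Real.exp (-(x / (k:ℝ))) := by linarith
  positivity

lemma approx_le (k : ℕ) {x : ℝ} (hx : 0 ≤ x) :
    (k:ℝ) * (1 - Real.exp (-(x / (k:ℝ)))) ≤ x := by
  rcases Nat.eq_zero_or_pos k with rfl | hk
  · simpa using hx
  · have hk0 : (0:ℝ) < (k:ℝ) := by positivity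
    have h := Real.add_one_le_exp (-(x / (k:ℝ)))
    have h2 : 1 - Real.exp (-(x / (k:ℝ))) ≤ x / (k:ℝ) := by linarith
    calc (k:ℝ) * (1 - Real.exp (-(x / (k:ℝ)))) ≤ (k:ℝ) * (x / (k:ℝ)) :=
          mul_le_mul_of_nonneg_left h2 (le_of_lt hk0)
      _ = x := by field_simp

/-- `k * (1 - exp(-(x/k))) → x` for `x ≥ 0`. -/
lemma approx_tendsto {x : ℝ} (hx : 0 ≤ x) :
    Tendsto (fun k : ℕ => (k:ℝ) * (1 - Real.exp (-(x / (k:ℝ))))) atTop (nhds x) := by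
  rcases eq_or_lt_of_le hx with rfl | hx0
  · simpa using tendsto_const_nhds (x := (0:ℝ)) (f := atTop (α := ℕ))
  have hv : Tendsto (fun k : ℕ => -(x / (k:ℝ))) atTop (nhdsWithin 0 {0}ᶜ) := by
    apply tendsto_nhdsWithin_of_tendsto_nhds_of_eventually_within
    · have : Tendsto (fun k : ℕ => x / (k:ℝ)) atTop (nhds 0) :=
        tendsto_const_div_atTop_nhds_zero_nat x
      simpa using this.neg
    · filter_upwards [eventually_ge_atTop 1] with k hk
      have hk0 : (0:ℝ) < (k:ℝ) := by positivity
      have : x / (k:ℝ) ≠ 0 := by positivity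
      simp [this]
  have h := (exp_slope.comp hv).mul_const x
  have heq : ∀ᶠ k : ℕ in atTop,
      ((fun v : ℝ => (Real.exp v - 1) / v) ∘ fun k : ℕ => -(x / (k:ℝ))) k * x
        = (k:ℝ) * (1 - Real.exp (-(x / (k:ℝ)))) := by
    filter_upwards [eventually_ge_atTop 1] with k hk
    have hk0 : (k:ℝ) ≠ 0 := by positivity
    have hxne : x ≠ 0 := ne_of_gt hx0
    have hne : -(x / (k:ℝ)) ≠ 0 := by
      simp only [neg_ne_zero]; positivity
    simp only [Function.comp]
    rw [div_mul_eq_mul_div, div_eq_iff hne]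
    field_simp
    ring
  simpa using h.congr' heq

/-- If `k * r_k → c` then `r_k → 0`. -/
lemma r_to_zero {r : ℕ → ℝ} {c : ℝ} (h : Tendsto (fun k : ℕ => (k:ℝ) * r k) atTop (nhds c)) :
    Tendsto r atTop (nhds 0) := by
  have h2 := h.mul (tendsto_const_div_atTop_nhds_zero_nat 1)
  rw [mul_zero] at h2
  apply h2.congr'
  filter_upwards [eventually_ge_atTop 1] with k hk
  have hk0 : (k:ℝ) ≠ 0 := by positivity
  field_simp

/-- If `k * r_k → c` then `k * (1 - exp (r_k)) → -c`. -/
lemma exp_expand {r : ℕ → ℝ} {c : ℝ}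
    (h : Tendsto (fun k : ℕ => (k:ℝ) * r k) atTop (nhds c)) :
    Tendsto (fun k : ℕ => (k:ℝ) * (1 - Real.exp (r k))) atTop (nhds (-c)) := by
  have hr0 := r_to_zero h
  have hsecond : Tendsto (fun k : ℕ => (k:ℝ) * (Real.exp (r k) - 1 - r k)) atTop (nhds 0) := by
    apply squeeze_zero_norm' (a := fun k : ℕ => |(k:ℝ) * r k| * |r k|)
    · have habs : Tendsto (fun k => |r k|) atTop (nhds 0) := by simpa using hr0.abs
      filter_upwards [habs.eventually_le_const (by norm_num : (0:ℝ) < 1)] with k hk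
      have hb := Real.abs_exp_sub_one_sub_id_le hk
      calc ‖(k:ℝ) * (Real.exp (r k) - 1 - r k)‖ = (k:ℝ) * |Real.exp (r k) - 1 - r k| := by
            rw [norm_mul]; simp [abs_of_nonneg (Nat.cast_nonneg k : (0:ℝ) ≤ (k:ℝ))]
        _ ≤ (k:ℝ) * (r k ^ 2) := mul_le_mul_of_nonneg_left hb (Nat.cast_nonneg k)
        _ = |(k:ℝ) * r k| * |r k| := by
            rw [abs_mul, abs_of_nonneg (Nat.cast_nonneg k : (0:ℝ) ≤ (k:ℝ)), sq, mul_assoc,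
              abs_mul_abs_self]
    · simpa using h.abs.mul hr0.abs
  have := (h.neg.sub hsecond)
  rw [sub_zero] at this
  apply this.congr
  intro k; ring

/-- If `k^2 * K_k → c` then `k^2 * (exp (K_k) - 1) → c`. -/
lemma exp_expand2 {K : ℕ → ℝ} {c : ℝ}
    (h : Tendsto (fun k : ℕ => (k:ℝ)^2 * K k) atTop (nhds c)) :
    Tendsto (fun k : ℕ => (k:ℝ)^2 * (Real.exp (K k) - 1)) atTop (nhds c) := by
  have hK0 : Tendsto K atTop (nhds 0) := by
    have h2 := h.mul ((tendsto_const_div_atTop_nhds_zero_nat 1).mul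
      (tendsto_const_div_atTop_nhds_zero_nat 1))
    rw [mul_zero, mul_zero] at h2
    apply h2.congr'
    filter_upwards [eventually_ge_atTop 1] with k hk
    have hk0 : (k:ℝ) ≠ 0 := by positivity
    field_simp
  have hsecond : Tendsto (fun k : ℕ => (k:ℝ)^2 * (Real.exp (K k) - 1 - K k)) atTop (nhds 0) := by
    apply squeeze_zero_norm' (a := fun k : ℕ => |(k:ℝ)^2 * K k| * |K k|)
    · have habs : Tendsto (fun k => |K k|) atTop (nhds 0) := by simpa using hK0.abs
      filter_upwards [habs.eventually_le_const (by norm_num : (0:ℝ) < 1)] with k hk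
      have hb := Real.abs_exp_sub_one_sub_id_le hk
      have hk2 : (0:ℝ) ≤ (k:ℝ)^2 := sq_nonneg _
      calc ‖(k:ℝ)^2 * (Real.exp (K k) - 1 - K k)‖ = (k:ℝ)^2 * |Real.exp (K k) - 1 - K k| := by
            rw [norm_mul]; simp [abs_of_nonneg hk2]
        _ ≤ (k:ℝ)^2 * (K k ^ 2) := mul_le_mul_of_nonneg_left hb hk2
        _ = |(k:ℝ)^2 * K k| * |K k| := by
            rw [abs_mul, abs_of_nonneg hk2, sq (K k), mul_assoc, abs_mul_abs_self]
    · simpa using h.abs.mul hK0.abs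
  have := h.add hsecond
  rw [add_zero] at this
  apply this.congr
  intro k; ring

/-- Fatou sandwich: if `0 ≤ g k ≤ X`, `g k → X` pointwise, each `g k` bounded,
and `∫ g k → L`, then `∫ X = L`. -/
lemma integral_sandwich {Ω : Type*} [MeasurableSpace Ω] {P : Measure Ω} [IsProbabilityMeasure P]
    {X : Ω → ℝ} (hX : AEStronglyMeasurable X P) (hX0 : ∀ ω, 0 ≤ X ω)
    {g : ℕ → Ω → ℝ} (hgmeas : ∀ k, AEStronglyMeasurable (g k) P)
    (hg0 : ∀ k ω, 0 ≤ g k ω) (hgle : ∀ k ω, g k ω ≤ X ω)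
    (hgtend : ∀ ω, Tendsto (fun k => g k ω) atTop (nhds (X ω)))
    (hgbd : ∀ k, ∃ c : ℝ, ∀ ω, g k ω ≤ c)
    {L : ℝ} (hL : Tendsto (fun k => ∫ ω, g k ω ∂P) atTop (nhds L)) :
    ∫ ω, X ω ∂P = L := by
  have hgint : ∀ k, Integrable (g k) P := by
    intro k
    obtain ⟨c, hc⟩ := hgbd k
    exact (integrable_const c).mono' (hgmeas k)
      (Eventually.of_forall fun ω => by
        rw [Real.norm_eq_abs, abs_of_nonneg (hg0 k ω)]; exact hc ω)
  set G : ℕ → ENNReal := fun k => ∫⁻ ω, ENNReal.ofReal (g k ω) ∂P with hG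
  set LX : ENNReal := ∫⁻ ω, ENNReal.ofReal (X ω) ∂P with hLX
  have hGk : ∀ k, G k = ENNReal.ofReal (∫ ω, g k ω ∂P) := fun k =>
    (ofReal_integral_eq_lintegral_ofReal (hgint k) (Eventually.of_forall (hg0 k))).symm
  have hGtend : Tendsto G atTop (nhds (ENNReal.ofReal L)) := by
    rw [show G = fun k => ENNReal.ofReal (∫ ω, g k ω ∂P) from funext hGk]
    exact (ENNReal.continuous_ofReal.tendsto L).comp hL
  have hGle : ∀ k, G k ≤ LX := fun k =>
    lintegral_mono fun ω => ENNReal.ofReal_le_ofReal (hgle k ω)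
  have hLXle : LX ≤ ENNReal.ofReal L := by
    have hliminf : LX ≤ liminf G atTop := by
      have : ∀ ω, ENNReal.ofReal (X ω) = liminf (fun k => ENNReal.ofReal (g k ω)) atTop := by
        intro ω
        exact (((ENNReal.continuous_ofReal.tendsto _).comp (hgtend ω)).liminf_eq).symm
      calc LX = ∫⁻ ω, liminf (fun k => ENNReal.ofReal (g k ω)) atTop ∂P := by
            rw [hLX]; exact lintegral_congr this
        _ ≤ liminf (fun k => ∫⁻ ω, ENNReal.ofReal (g k ω) ∂P) atTop :=
            lintegral_liminf_le' fun k =>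
              (ENNReal.measurable_ofReal.comp_aemeasurable (hgmeas k).aemeasurable)
    rwa [hGtend.liminf_eq] at hliminf
  have hleLX : ENNReal.ofReal L ≤ LX := le_of_tendsto hGtend (Eventually.of_forall hGle)
  have hLXeq : LX = ENNReal.ofReal L := le_antisymm hLXle hleLX
  have hLnonneg : 0 ≤ L :=
    ge_of_tendsto hL (Eventually.of_forall fun k => integral_nonneg (hg0 k))
  rw [integral_eq_lintegral_of_nonneg_ae (Eventually.of_forall hX0) hX, ← hLX, hLXeq,
    ENNReal.toReal_ofReal hLnonneg]



/-- Integrability of bounded measurable functions on `Icc 0 1`. -/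
lemma integrableOn_Icc_of_bounded {u : ℝ → ℝ} (hu : Measurable u) {c : ℝ}
    (hc : ∀ x, |u x| ≤ c) : IntegrableOn u (Icc (0:ℝ) 1) := by
  have hconst : IntegrableOn (fun _ : ℝ => c) (Icc (0:ℝ) 1) volume :=
    integrableOn_const measure_Icc_lt_top.ne
  exact hconst.mono' hu.aestronglyMeasurable.restrict
    (Eventually.of_forall fun x => by simpa [Real.norm_eq_abs] using hc x)

section Model

variable {Ω : Type*} [MeasurableSpace Ω] {P : Measure Ω} {n : ℕ} {lam mu σ : ℝ} {f : ℝ → ℝ}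
  {M N : Ω → Measure ℝ}

lemma f_int (model : IsDispersalModel P n lam mu σ f M N) : Integrable f := by
  by_contra h
  have := model.f_prob
  rw [integral_undef h] at this
  norm_num at this

lemma fdil_meas (model : IsDispersalModel P n lam mu σ f M N) : Measurable (fdil σ f) :=
  (model.f_meas.comp (measurable_id.div_const σ)).const_mul σ⁻¹

lemma fdil_nonneg (model : IsDispersalModel P n lam mu σ f M N) (z : ℝ) : 0 ≤ fdil σ f z :=
  mul_nonneg (inv_nonneg.2 (le_of_lt model.sigma_pos)) (model.f_nonneg _)

lemma fdil_int (model : IsDispersalModel P n lam mu σ f M N) : Integrable (fdil σ f) :=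
  ((f_int model).comp_div (ne_of_gt model.sigma_pos)).const_mul σ⁻¹

lemma fdil_integral (model : IsDispersalModel P n lam mu σ f M N) :
    ∫ z, fdil σ f z = 1 := by
  have hσ := model.sigma_pos
  calc ∫ z, fdil σ f z = σ⁻¹ * ∫ z, f (z / σ) := by
        simp only [fdil]; exact integral_const_mul σ⁻¹ _
    _ = σ⁻¹ * (|σ| • ∫ z, f z) := by rw [MeasureTheory.Measure.integral_comp_div]
    _ = 1 := by
        rw [abs_of_pos hσ, smul_eq_mul, model.f_prob, mul_one, inv_mul_cancel₀ (ne_of_gt hσ)]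

/-- `Q_B(x) = ∫_B f_σ(y - x) dy`. -/
noncomputable
def QB (σ : ℝ) (f : ℝ → ℝ) (B : Set ℝ) (x : ℝ) : ℝ := ∫ y in B, fdil σ f (y - x)

lemma Qker_eq_QB (σ : ℝ) (f : ℝ → ℝ) (A B : Set ℝ) :
    Qker σ f A B = ∫ x in A, QB σ f B x := rfl

lemma QB_nonneg (model : IsDispersalModel P n lam mu σ f M N) (B : Set ℝ) (x : ℝ) :
    0 ≤ QB σ f B x :=
  integral_nonneg fun y => fdil_nonneg model _

lemma QB_le_one (model : IsDispersalModel P n lam mu σ f M N) (B : Set ℝ) (x : ℝ) :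
    QB σ f B x ≤ 1 := by
  have h1 : QB σ f B x ≤ ∫ y, fdil σ f (y - x) :=
    setIntegral_le_integral ((fdil_int model).comp_sub_right x)
      (Eventually.of_forall fun y => fdil_nonneg model _)
  rw [integral_sub_right_eq_self (fdil σ f) x, fdil_integral model] at h1
  exact h1

lemma QB_meas (model : IsDispersalModel P n lam mu σ f M N) {B : Set ℝ} :
    Measurable (QB σ f B) := by
  have h : StronglyMeasurable (fun p : ℝ × ℝ => fdil σ f (p.2 - p.1)) :=
    ((fdil_meas model).comp (measurable_snd.sub measurable_fst)).stronglyMeasurable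
  exact h.integral_prod_right'.measurable

lemma QB_empty (σ : ℝ) (f : ℝ → ℝ) (x : ℝ) : QB σ f ∅ x = 0 := by
  simp [QB]

lemma Q2ker_eq_QB (σ : ℝ) (f : ℝ → ℝ) (A B₁ B₂ : Set ℝ) :
    Q2ker σ f A B₁ B₂ = ∫ x in A, QB σ f B₁ x * QB σ f B₂ x := by
  unfold Q2ker
  refine integral_congr_ae (Eventually.of_forall fun x => ?_)
  calc ∫ y₁ in B₁, ∫ y₂ in B₂, fdil σ f (y₁ - x) * fdil σ f (y₂ - x)
      = ∫ y₁ in B₁, fdil σ f (y₁ - x) * QB σ f B₂ x :=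
        integral_congr_ae (Eventually.of_forall fun y₁ => integral_const_mul _ _)
    _ = QB σ f B₁ x * QB σ f B₂ x := integral_mul_const _ _

/-- Specialization of the Laplace functional to `h = (-s)·1_{B₁} + (-t)·1_{B₂}`. -/
lemma laplace_two (model : IsDispersalModel P n lam mu σ f M N)
    {B₁ B₂ : Set ℝ} (h1m : MeasurableSet B₁) (h2m : MeasurableSet B₂)
    (h1b : Bornology.IsBounded B₁) (h2b : Bornology.IsBounded B₂)
    (hd : Disjoint B₁ B₂) (s t : ℝ) :
    ∫ ω, Real.exp (-(s * ((N ω) B₁).toReal) - t * ((N ω) B₂).toReal) ∂P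
      = Real.exp ((n : ℝ) * lam * ∫ x in Icc (0:ℝ) 1,
          (Real.exp (mu * ((Real.exp (-s) - 1) * QB σ f B₁ x
            + (Real.exp (-t) - 1) * QB σ f B₂ x)) - 1)) := by
  set h : ℝ → ℝ := fun y =>
    B₁.indicator (fun _ => -s) y + B₂.indicator (fun _ => -t) y with hh
  have hmeas : Measurable h :=
    (measurable_const.indicator h1m).add (measurable_const.indicator h2m)
  have hbd : ∃ c, ∀ y, |h y| ≤ c := by
    refine ⟨|s| + |t|, fun y => ?_⟩
    have h1 : |B₁.indicator (fun _ => -s) y| ≤ |s| := by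
      by_cases hy : y ∈ B₁ <;> simp [hy]
    have h2 : |B₂.indicator (fun _ => -t) y| ≤ |t| := by
      by_cases hy : y ∈ B₂ <;> simp [hy]
    exact (abs_add_le _ _).trans (add_le_add h1 h2)
  have hsupp : ∃ R, ∀ y : ℝ, R < |y| → h y = 0 := by
    obtain ⟨R, hR⟩ := (h1b.union h2b).subset_closedBall 0
    refine ⟨R, fun y hy => ?_⟩
    have hy1 : y ∉ B₁ ∪ B₂ := by
      intro hmem
      have := hR hmem
      rw [Metric.mem_closedBall, Real.dist_eq, sub_zero] at this
      linarith
    have hy1' : y ∉ B₁ := fun h' => hy1 (Or.inl h')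
    have hy2' : y ∉ B₂ := fun h' => hy1 (Or.inr h')
    simp [hh, hy1', hy2']
  have L := model.laplace (fun _ => 0) h measurable_const hmeas
    ⟨0, fun x => by simp⟩ hbd hsupp
  have hLHS : ∀ ω, Real.exp ((∫ x, (0:ℝ) ∂(M ω)) + ∫ y, h y ∂(N ω))
      = Real.exp (-(s * ((N ω) B₁).toReal) - t * ((N ω) B₂).toReal) := by
    intro ω
    have i1 : Integrable (B₁.indicator fun _ => -s) (N ω) :=
      (integrable_indicator_iff h1m).2
        (integrableOn_const (model.N_locFinite ω B₁ h1b).ne)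
    have i2 : Integrable (B₂.indicator fun _ => -t) (N ω) :=
      (integrable_indicator_iff h2m).2
        (integrableOn_const (model.N_locFinite ω B₂ h2b).ne)
    have : ∫ y, h y ∂(N ω) = ((N ω) B₁).toReal • (-s) + ((N ω) B₂).toReal • (-t) := by
      rw [hh]
      rw [integral_add i1 i2, integral_indicator h1m, integral_indicator h2m,
        setIntegral_const, setIntegral_const]
      rfl
    rw [this, integral_zero]
    congr 1
    simp only [smul_eq_mul]
    ring
  have hRHS : ∀ x : ℝ, Real.exp ((fun _ : ℝ => (0:ℝ)) x
        + mu * ∫ y, (Real.exp (h y) - 1) * fdil σ f (y - x)) - 1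
      = Real.exp (mu * ((Real.exp (-s) - 1) * QB σ f B₁ x
        + (Real.exp (-t) - 1) * QB σ f B₂ x)) - 1 := by
    intro x
    have hpt : ∀ y, (Real.exp (h y) - 1) * fdil σ f (y - x)
        = B₁.indicator (fun y => (Real.exp (-s) - 1) * fdil σ f (y - x)) y
          + B₂.indicator (fun y => (Real.exp (-t) - 1) * fdil σ f (y - x)) y := by
      intro y
      by_cases hy1 : y ∈ B₁
      · have hy2 : y ∉ B₂ := fun h2 => (disjoint_left.1 hd) hy1 h2
        simp [hh, hy1, hy2]
      · by_cases hy2 : y ∈ B₂ <;> simp [hh, hy1, hy2]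
    have i1 : Integrable (B₁.indicator fun y => (Real.exp (-s) - 1) * fdil σ f (y - x)) :=
      (integrable_indicator_iff h1m).2
        ((((fdil_int model).comp_sub_right x).const_mul _).integrableOn)
    have i2 : Integrable (B₂.indicator fun y => (Real.exp (-t) - 1) * fdil σ f (y - x)) :=
      (integrable_indicator_iff h2m).2
        ((((fdil_int model).comp_sub_right x).const_mul _).integrableOn)
    have : ∫ y, (Real.exp (h y) - 1) * fdil σ f (y - x)
        = (Real.exp (-s) - 1) * QB σ f B₁ x + (Real.exp (-t) - 1) * QB σ f B₂ x := by
      rw [integral_congr_ae (Eventually.of_forall hpt), integral_add i1 i2,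
        integral_indicator h1m, integral_indicator h2m]
      unfold QB
      rw [integral_const_mul, integral_const_mul]
    rw [this]
    norm_num
  calc ∫ ω, Real.exp (-(s * ((N ω) B₁).toReal) - t * ((N ω) B₂).toReal) ∂P
      = ∫ ω, Real.exp ((∫ x, (0:ℝ) ∂(M ω)) + ∫ y, h y ∂(N ω)) ∂P :=
        integral_congr_ae (Eventually.of_forall fun ω => (hLHS ω).symm)
    _ = Real.exp ((n : ℝ) * lam * ∫ x in Icc (0:ℝ) 1,
          (Real.exp ((fun _ : ℝ => (0:ℝ)) x
            + mu * ∫ y, (Real.exp (h y) - 1) * fdil σ f (y - x)) - 1)) := L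
    _ = _ := by
        congr 1
        rw [mul_eq_mul_left_iff]
        left
        exact integral_congr_ae (Eventually.of_forall hRHS)

lemma int_lim_one {a : ℝ → ℝ} (hmeas : Measurable a) (h0 : ∀ x, 0 ≤ a x) {C : ℝ}
    (hC : ∀ x, a x ≤ C) :
    Tendsto (fun k : ℕ => (k:ℝ) * ∫ x in Icc (0:ℝ) 1,
        (Real.exp ((Real.exp (-1 / (k:ℝ)) - 1) * a x) - 1)) atTop
      (nhds (-∫ x in Icc (0:ℝ) 1, a x)) := by
  have hrw : ∀ k : ℕ, (k:ℝ) * ∫ x in Icc (0:ℝ) 1,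
      (Real.exp ((Real.exp (-1/(k:ℝ)) - 1) * a x) - 1)
      = ∫ x in Icc (0:ℝ) 1, (k:ℝ) * (Real.exp ((Real.exp (-1/(k:ℝ)) - 1) * a x) - 1) :=
    fun k => (integral_const_mul _ _).symm
  have hneg : -∫ x in Icc (0:ℝ) 1, a x = ∫ x in Icc (0:ℝ) 1, -(a x) := (integral_neg a).symm
  rw [hneg]
  refine Tendsto.congr (fun k => (hrw k).symm) ?_
  apply tendsto_integral_of_dominated_convergence (bound := fun _ => C)
  · intro k
    exact (((Real.measurable_exp.comp (hmeas.const_mul _)).sub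
      measurable_const).const_mul _).aestronglyMeasurable
  · exact integrableOn_const measure_Icc_lt_top.ne
  · intro k
    refine Eventually.of_forall fun x => ?_
    rw [Real.norm_eq_abs]
    exact (bnd1 k (h0 x)).trans (hC x)
  · exact Eventually.of_forall fun x => scalar_lim' (a x) (h0 x)

lemma int_lim_two {a b : ℝ → ℝ} (hma : Measurable a) (hmb : Measurable b)
    (h0a : ∀ x, 0 ≤ a x) (h0b : ∀ x, 0 ≤ b x) {C : ℝ}
    (hCa : ∀ x, a x ≤ C) (hCb : ∀ x, b x ≤ C) :
    Tendsto (fun k : ℕ => (k:ℝ)^2 * ∫ x in Icc (0:ℝ) 1,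
        ((Real.exp ((Real.exp (-1/(k:ℝ)) - 1) * a x) - 1) *
         (Real.exp ((Real.exp (-1/(k:ℝ)) - 1) * b x) - 1))) atTop
      (nhds (∫ x in Icc (0:ℝ) 1, a x * b x)) := by
  have hrw : ∀ k : ℕ, (k:ℝ)^2 * ∫ x in Icc (0:ℝ) 1,
      ((Real.exp ((Real.exp (-1/(k:ℝ)) - 1) * a x) - 1) *
       (Real.exp ((Real.exp (-1/(k:ℝ)) - 1) * b x) - 1))
      = ∫ x in Icc (0:ℝ) 1,
        ((k:ℝ) * (Real.exp ((Real.exp (-1/(k:ℝ)) - 1) * a x) - 1)) *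
        ((k:ℝ) * (Real.exp ((Real.exp (-1/(k:ℝ)) - 1) * b x) - 1)) := by
    intro k
    rw [← integral_const_mul]
    exact integral_congr_ae (Eventually.of_forall fun x => by ring)
  refine Tendsto.congr (fun k => (hrw k).symm) ?_
  apply tendsto_integral_of_dominated_convergence (bound := fun _ => C * C)
  · intro k
    exact ((((Real.measurable_exp.comp (hma.const_mul _)).sub
      measurable_const).const_mul _).mul
      (((Real.measurable_exp.comp (hmb.const_mul _)).sub
      measurable_const).const_mul _)).aestronglyMeasurable
  · exact integrableOn_const measure_Icc_lt_top.ne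
  · intro k
    refine Eventually.of_forall fun x => ?_
    rw [Real.norm_eq_abs, abs_mul]
    calc |(k:ℝ) * (Real.exp ((Real.exp (-1/(k:ℝ)) - 1) * a x) - 1)| *
          |(k:ℝ) * (Real.exp ((Real.exp (-1/(k:ℝ)) - 1) * b x) - 1)|
        ≤ a x * b x := mul_le_mul (bnd1 k (h0a x)) (bnd1 k (h0b x)) (abs_nonneg _) (h0a x)
      _ ≤ C * C := mul_le_mul (hCa x) (hCb x) (h0b x) ((h0a x).trans (hCa x))
  · refine Eventually.of_forall fun x => ?_
    have := (scalar_lim' (a x) (h0a x)).mul (scalar_lim' (b x) (h0b x))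
    rwa [neg_mul_neg] at this

variable {Ω : Type*} [MeasurableSpace Ω] {P : Measure Ω} {n : ℕ} {lam mu σ : ℝ} {f : ℝ → ℝ}
  {M N : Ω → Measure ℝ}

/-- First moment of `N(B)` for bounded measurable `B`. -/
lemma moment_one (model : IsDispersalModel P n lam mu σ f M N)
    {B : Set ℝ} (hBm : MeasurableSet B) (hBb : Bornology.IsBounded B) :
    ∫ ω, ((N ω) B).toReal ∂P = (n:ℝ) * lam * mu * Qker σ f (Icc (0:ℝ) 1) B := by
  haveI := model.prob
  set a : ℝ → ℝ := fun x => mu * QB σ f B x with ha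
  have hmeasa : Measurable a := (QB_meas model).const_mul mu
  have h0a : ∀ x, 0 ≤ a x := fun x => mul_nonneg model.mu_pos.le (QB_nonneg model B x)
  have hCa : ∀ x, a x ≤ mu := fun x => by
    have h := QB_le_one model B x
    calc a x ≤ mu * 1 := mul_le_mul_of_nonneg_left h model.mu_pos.le
      _ = mu := mul_one mu
  have hXmeas : Measurable (fun ω => ((N ω) B).toReal) := (model.N_meas B hBm).ennreal_toReal
  have hlap : ∀ k : ℕ, ∫ ω, Real.exp (-(((N ω) B).toReal / (k:ℝ))) ∂P
      = Real.exp ((n:ℝ) * lam * ∫ x in Icc (0:ℝ) 1,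
          (Real.exp ((Real.exp (-1/(k:ℝ)) - 1) * a x) - 1)) := by
    intro k
    have h := laplace_two model hBm MeasurableSet.empty hBb Bornology.isBounded_empty
      (disjoint_empty B) (1/(k:ℝ)) 0
    have hl : ∀ ω, Real.exp (-(1/(k:ℝ) * ((N ω) B).toReal) - 0 * ((N ω) (∅:Set ℝ)).toReal)
        = Real.exp (-(((N ω) B).toReal / (k:ℝ))) := by
      intro ω; congr 1; ring
    have hr : ∀ x : ℝ, Real.exp (mu * ((Real.exp (-(1/(k:ℝ))) - 1) * QB σ f B x
          + (Real.exp (-(0:ℝ)) - 1) * QB σ f (∅:Set ℝ) x)) - 1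
        = Real.exp ((Real.exp (-1/(k:ℝ)) - 1) * a x) - 1 := by
      intro x
      have h1 : -(1/(k:ℝ)) = -1/(k:ℝ) := by ring
      rw [QB_empty, h1]
      simp only [neg_zero, Real.exp_zero, sub_self, zero_mul, mul_zero, add_zero]
      congr 2
      ring
    calc ∫ ω, Real.exp (-(((N ω) B).toReal / (k:ℝ))) ∂P
        = ∫ ω, Real.exp (-(1/(k:ℝ) * ((N ω) B).toReal) - 0 * ((N ω) (∅:Set ℝ)).toReal) ∂P :=
          integral_congr_ae (Eventually.of_forall fun ω => (hl ω).symm)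
      _ = Real.exp ((n : ℝ) * lam * ∫ x in Icc (0:ℝ) 1,
            (Real.exp (mu * ((Real.exp (-(1/(k:ℝ))) - 1) * QB σ f B x
              + (Real.exp (-(0:ℝ)) - 1) * QB σ f (∅:Set ℝ) x)) - 1)) := h
      _ = _ := by
          congr 1
          rw [mul_eq_mul_left_iff]
          left
          exact integral_congr_ae (Eventually.of_forall hr)
  set g : ℕ → Ω → ℝ := fun k ω => (k:ℝ) * (1 - Real.exp (-(((N ω) B).toReal / (k:ℝ)))) with hg
  have hexpint : ∀ k : ℕ, Integrable (fun ω => Real.exp (-(((N ω) B).toReal / (k:ℝ)))) P := by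
    intro k
    refine (integrable_const 1).mono'
      ((Real.measurable_exp.comp (hXmeas.div_const _).neg).aestronglyMeasurable)
      (Eventually.of_forall fun ω => ?_)
    rw [Real.norm_eq_abs, abs_of_nonneg (Real.exp_nonneg _)]
    refine Real.exp_le_one_iff.mpr ?_
    have : 0 ≤ ((N ω) B).toReal / (k:ℝ) := div_nonneg ENNReal.toReal_nonneg (Nat.cast_nonneg k)
    linarith
  have hgint_eq : ∀ k : ℕ, ∫ ω, g k ω ∂P
      = (k:ℝ) * (1 - Real.exp ((n:ℝ) * lam * ∫ x in Icc (0:ℝ) 1,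
          (Real.exp ((Real.exp (-1/(k:ℝ)) - 1) * a x) - 1))) := by
    intro k
    rw [hg]
    simp only
    rw [integral_const_mul, integral_sub (integrable_const 1) (hexpint k), integral_const]
    rw [probReal_univ, smul_eq_mul, one_mul, hlap k]
  have hL : Tendsto (fun k : ℕ => ∫ ω, g k ω ∂P) atTop
      (nhds ((n:ℝ) * lam * ∫ x in Icc (0:ℝ) 1, a x)) := by
    have h1 : Tendsto (fun k : ℕ => (k:ℝ) * ((n:ℝ) * lam * ∫ x in Icc (0:ℝ) 1,
        (Real.exp ((Real.exp (-1/(k:ℝ)) - 1) * a x) - 1))) atTop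
        (nhds ((n:ℝ) * lam * -∫ x in Icc (0:ℝ) 1, a x)) := by
      have h2 := (int_lim_one hmeasa h0a hCa).const_mul ((n:ℝ) * lam)
      refine h2.congr fun k => ?_
      ring
    have h3 := exp_expand h1
    rw [show -((n:ℝ) * lam * -∫ x in Icc (0:ℝ) 1, a x)
        = (n:ℝ) * lam * ∫ x in Icc (0:ℝ) 1, a x by ring] at h3
    exact h3.congr fun k => (hgint_eq k).symm
  have hfinal := integral_sandwich (P := P) hXmeas.aestronglyMeasurable
    (fun ω => ENNReal.toReal_nonneg)
    (fun k => (((hXmeas.div_const _).neg.exp.const_sub 1).const_mul _).aestronglyMeasurable)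
    (fun k ω => approx_nonneg k ENNReal.toReal_nonneg)
    (fun k ω => approx_le k ENNReal.toReal_nonneg)
    (fun ω => approx_tendsto ENNReal.toReal_nonneg)
    (fun k => ⟨(k:ℝ), fun ω => ?_⟩) hL
  · rw [hfinal]
    have : ∫ x in Icc (0:ℝ) 1, a x = mu * Qker σ f (Icc (0:ℝ) 1) B := by
      rw [Qker_eq_QB, ha, integral_const_mul]
    rw [this]; ring
  · -- g k ω ≤ k
    have h1 : 1 - Real.exp (-(((N ω) B).toReal / (k:ℝ))) ≤ 1 := by
      have := Real.exp_nonneg (-(((N ω) B).toReal / (k:ℝ))); linarith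
    calc (k:ℝ) * (1 - Real.exp (-(((N ω) B).toReal / (k:ℝ)))) ≤ (k:ℝ) * 1 :=
          mul_le_mul_of_nonneg_left h1 (Nat.cast_nonneg k)
      _ = (k:ℝ) := mul_one _

lemma exp_term_bound (k : ℕ) {a C : ℝ} (h0 : 0 ≤ a) (hC : a ≤ C) :
    |Real.exp ((Real.exp (-1/(k:ℝ)) - 1) * a) - 1| ≤ C := by
  set u := Real.exp (-1 / (k:ℝ)) - 1 with hu
  have hu0 : u ≤ 0 := uk_nonpos k
  have hu1 : -u ≤ 1 := by
    have := Real.exp_nonneg (-1 / (k:ℝ)); rw [hu]; linarith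
  have hw : u * a ≤ 0 := mul_nonpos_of_nonpos_of_nonneg hu0 h0
  have h1 : Real.exp (u * a) ≤ 1 := Real.exp_le_one_iff.mpr hw
  have h2 : 1 - Real.exp (u * a) ≤ -(u * a) := by
    have := Real.add_one_le_exp (u * a); linarith
  rw [abs_of_nonpos (by linarith)]
  calc -(Real.exp (u * a) - 1) = 1 - Real.exp (u * a) := by ring
    _ ≤ -(u * a) := h2
    _ = (-u) * a := by ring
    _ ≤ 1 * a := mul_le_mul_of_nonneg_right hu1 h0
    _ = a := one_mul a
    _ ≤ C := hC

lemma approx_le_nat (k : ℕ) {x : ℝ} (hx : 0 ≤ x) :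
    (k:ℝ) * (1 - Real.exp (-(x/(k:ℝ)))) ≤ (k:ℝ) := by
  have h1 : 1 - Real.exp (-(x/(k:ℝ))) ≤ 1 := by
    have := Real.exp_nonneg (-(x/(k:ℝ))); linarith
  calc (k:ℝ) * (1 - Real.exp (-(x/(k:ℝ)))) ≤ (k:ℝ) * 1 :=
        mul_le_mul_of_nonneg_left h1 (Nat.cast_nonneg k)
    _ = (k:ℝ) := mul_one _

variable {Ω : Type*} [MeasurableSpace Ω] {P : Measure Ω} {n : ℕ} {lam mu σ : ℝ} {f : ℝ → ℝ}
  {M N : Ω → Measure ℝ}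

/-- Laplace transform of `N(B)` at `1/k`. -/
lemma lap_single (model : IsDispersalModel P n lam mu σ f M N)
    {B : Set ℝ} (hBm : MeasurableSet B) (hBb : Bornology.IsBounded B) (k : ℕ) :
    ∫ ω, Real.exp (-(((N ω) B).toReal / (k:ℝ))) ∂P
      = Real.exp ((n:ℝ) * lam * ∫ x in Icc (0:ℝ) 1,
          (Real.exp ((Real.exp (-1/(k:ℝ)) - 1) * (mu * QB σ f B x)) - 1)) := by
  have h := laplace_two model hBm MeasurableSet.empty hBb Bornology.isBounded_empty
    (disjoint_empty B) (1/(k:ℝ)) 0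
  have hl : ∀ ω, Real.exp (-(1/(k:ℝ) * ((N ω) B).toReal) - 0 * ((N ω) (∅:Set ℝ)).toReal)
      = Real.exp (-(((N ω) B).toReal / (k:ℝ))) := by
    intro ω; congr 1; ring
  have hr : ∀ x : ℝ, Real.exp (mu * ((Real.exp (-(1/(k:ℝ))) - 1) * QB σ f B x
        + (Real.exp (-(0:ℝ)) - 1) * QB σ f (∅:Set ℝ) x)) - 1
      = Real.exp ((Real.exp (-1/(k:ℝ)) - 1) * (mu * QB σ f B x)) - 1 := by
    intro x
    have h1 : -(1/(k:ℝ)) = -1/(k:ℝ) := by ring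
    rw [QB_empty, h1]
    simp only [neg_zero, Real.exp_zero, sub_self, zero_mul, mul_zero, add_zero]
    congr 2
    ring
  calc ∫ ω, Real.exp (-(((N ω) B).toReal / (k:ℝ))) ∂P
      = ∫ ω, Real.exp (-(1/(k:ℝ) * ((N ω) B).toReal) - 0 * ((N ω) (∅:Set ℝ)).toReal) ∂P :=
        integral_congr_ae (Eventually.of_forall fun ω => (hl ω).symm)
    _ = _ := by
        rw [h]
        congr 1
        rw [mul_eq_mul_left_iff]
        left
        exact integral_congr_ae (Eventually.of_forall hr)

/-- Joint Laplace transform of `(N(B₁), N(B₂))` at `(1/k, 1/k)`. -/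
lemma lap_double (model : IsDispersalModel P n lam mu σ f M N)
    {B₁ B₂ : Set ℝ} (h1m : MeasurableSet B₁) (h2m : MeasurableSet B₂)
    (h1b : Bornology.IsBounded B₁) (h2b : Bornology.IsBounded B₂)
    (hd : Disjoint B₁ B₂) (k : ℕ) :
    ∫ ω, Real.exp (-(((N ω) B₁).toReal / (k:ℝ)) - ((N ω) B₂).toReal / (k:ℝ)) ∂P
      = Real.exp ((n:ℝ) * lam * ∫ x in Icc (0:ℝ) 1,
          (Real.exp ((Real.exp (-1/(k:ℝ)) - 1)
            * (mu * QB σ f B₁ x + mu * QB σ f B₂ x)) - 1)) := by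
  have h := laplace_two model h1m h2m h1b h2b hd (1/(k:ℝ)) (1/(k:ℝ))
  have hl : ∀ ω, Real.exp (-(1/(k:ℝ) * ((N ω) B₁).toReal) - 1/(k:ℝ) * ((N ω) B₂).toReal)
      = Real.exp (-(((N ω) B₁).toReal / (k:ℝ)) - ((N ω) B₂).toReal / (k:ℝ)) := by
    intro ω; congr 1; ring
  have hr : ∀ x : ℝ, Real.exp (mu * ((Real.exp (-(1/(k:ℝ))) - 1) * QB σ f B₁ x
        + (Real.exp (-(1/(k:ℝ))) - 1) * QB σ f B₂ x)) - 1
      = Real.exp ((Real.exp (-1/(k:ℝ)) - 1)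
          * (mu * QB σ f B₁ x + mu * QB σ f B₂ x)) - 1 := by
    intro x
    have h1 : -(1/(k:ℝ)) = -1/(k:ℝ) := by ring
    rw [h1]
    congr 2
    ring
  calc ∫ ω, Real.exp (-(((N ω) B₁).toReal / (k:ℝ)) - ((N ω) B₂).toReal / (k:ℝ)) ∂P
      = ∫ ω, Real.exp (-(1/(k:ℝ) * ((N ω) B₁).toReal) - 1/(k:ℝ) * ((N ω) B₂).toReal) ∂P :=
        integral_congr_ae (Eventually.of_forall fun ω => (hl ω).symm)
    _ = _ := by
        rw [h]
        congr 1
        rw [mul_eq_mul_left_iff]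
        left
        exact integral_congr_ae (Eventually.of_forall hr)

lemma exp_neg_div_integrable (model : IsDispersalModel P n lam mu σ f M N)
    {B : Set ℝ} (hBm : MeasurableSet B) (k : ℕ) :
    Integrable (fun ω => Real.exp (-(((N ω) B).toReal / (k:ℝ)))) P := by
  haveI := model.prob
  have hXmeas : Measurable (fun ω => ((N ω) B).toReal) := (model.N_meas B hBm).ennreal_toReal
  refine (integrable_const 1).mono'
    ((Real.measurable_exp.comp (hXmeas.div_const _).neg).aestronglyMeasurable)
    (Eventually.of_forall fun ω => ?_)
  rw [Real.norm_eq_abs, abs_of_nonneg (Real.exp_nonneg _)]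
  refine Real.exp_le_one_iff.mpr ?_
  have : 0 ≤ ((N ω) B).toReal / (k:ℝ) := div_nonneg ENNReal.toReal_nonneg (Nat.cast_nonneg k)
  linarith
end Model
end DispersalAux

open DispersalAux

/-- Lemma 16(i): second moment of `N` on disjoint bounded intervals. -/
theorem dispersal_second_moment_NN
    {Ω : Type*} [MeasurableSpace Ω] (P : Measure Ω)
    (n : ℕ) (lam mu σ : ℝ) (f : ℝ → ℝ) (M N : Ω → Measure ℝ)
    (model : IsDispersalModel P n lam mu σ f M N)
    (B₁ B₂ : Set ℝ) (hB₁meas : MeasurableSet B₁) (hB₂meas : MeasurableSet B₂)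
    (hB₁int : B₁.OrdConnected) (hB₂int : B₂.OrdConnected)
    (hB₁bdd : Bornology.IsBounded B₁) (hB₂bdd : Bornology.IsBounded B₂)
    (hdisj : Disjoint B₁ B₂) :
    (∫ ω, (N ω B₁).toReal * (N ω B₂).toReal ∂P
        = (n : ℝ)^2 * lam^2 * mu^2 * Qker σ f (Set.Icc (0:ℝ) 1) B₁
            * Qker σ f (Set.Icc (0:ℝ) 1) B₂
          + (n : ℝ) * lam * mu^2 * Q2ker σ f (Set.Icc (0:ℝ) 1) B₁ B₂)
    ∧ (∫ ω, (N ω B₁).toReal * (N ω B₂).toReal ∂P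
        = (∫ ω, (N ω B₁).toReal ∂P) * (∫ ω, (N ω B₂).toReal ∂P)
          + (n : ℝ) * lam * mu^2 * Q2ker σ f (Set.Icc (0:ℝ) 1) B₁ B₂)
    ∧ (∀ B : Set ℝ, MeasurableSet B → Bornology.IsBounded B →
        ∫ ω, (N ω B).toReal ∂P = (n : ℝ) * lam * mu * Qker σ f (Set.Icc (0:ℝ) 1) B) := by
  haveI := model.prob
  have claim3 : ∀ B : Set ℝ, MeasurableSet B → Bornology.IsBounded B →
      ∫ ω, (N ω B).toReal ∂P = (n:ℝ) * lam * mu * Qker σ f (Icc (0:ℝ) 1) B :=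
    fun B hm hbd => moment_one model hm hbd
  set a : ℝ → ℝ := fun x => mu * QB σ f B₁ x with ha
  set b : ℝ → ℝ := fun x => mu * QB σ f B₂ x with hb
  have hma : Measurable a := (QB_meas model).const_mul mu
  have hmb : Measurable b := (QB_meas model).const_mul mu
  have h0a : ∀ x, 0 ≤ a x := fun x => mul_nonneg model.mu_pos.le (QB_nonneg model B₁ x)
  have h0b : ∀ x, 0 ≤ b x := fun x => mul_nonneg model.mu_pos.le (QB_nonneg model B₂ x)
  have hCa : ∀ x, a x ≤ mu := fun x => by
    have h := QB_le_one model B₁ x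
    calc a x ≤ mu * 1 := mul_le_mul_of_nonneg_left h model.mu_pos.le
      _ = mu := mul_one mu
  have hCb : ∀ x, b x ≤ mu := fun x => by
    have h := QB_le_one model B₂ x
    calc b x ≤ mu * 1 := mul_le_mul_of_nonneg_left h model.mu_pos.le
      _ = mu := mul_one mu
  have hX1 : Measurable (fun ω => (N ω B₁).toReal) := (model.N_meas B₁ hB₁meas).ennreal_toReal
  have hX2 : Measurable (fun ω => (N ω B₂).toReal) := (model.N_meas B₂ hB₂meas).ennreal_toReal
  set I1 : ℕ → ℝ := fun k =>
    ∫ x in Icc (0:ℝ) 1, (Real.exp ((Real.exp (-1/(k:ℝ)) - 1) * a x) - 1) with hI1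
  set I2 : ℕ → ℝ := fun k =>
    ∫ x in Icc (0:ℝ) 1, (Real.exp ((Real.exp (-1/(k:ℝ)) - 1) * b x) - 1) with hI2
  set Ip : ℕ → ℝ := fun k =>
    ∫ x in Icc (0:ℝ) 1, ((Real.exp ((Real.exp (-1/(k:ℝ)) - 1) * a x) - 1)
      * (Real.exp ((Real.exp (-1/(k:ℝ)) - 1) * b x) - 1)) with hIp
  -- marginal limits
  have hkr1 : Tendsto (fun k : ℕ => (k:ℝ) * ((n:ℝ) * lam * I1 k)) atTop
      (nhds ((n:ℝ) * lam * -∫ x in Icc (0:ℝ) 1, a x)) := by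
    have h2 := (int_lim_one hma h0a hCa).const_mul ((n:ℝ) * lam)
    refine h2.congr fun k => ?_
    simp only [hI1]
    ring
  have hkr2 : Tendsto (fun k : ℕ => (k:ℝ) * ((n:ℝ) * lam * I2 k)) atTop
      (nhds ((n:ℝ) * lam * -∫ x in Icc (0:ℝ) 1, b x)) := by
    have h2 := (int_lim_one hmb h0b hCb).const_mul ((n:ℝ) * lam)
    refine h2.congr fun k => ?_
    simp only [hI2]
    ring
  have hE1 : Tendsto (fun k : ℕ => (k:ℝ) * (1 - Real.exp ((n:ℝ) * lam * I1 k))) atTop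
      (nhds ((n:ℝ) * lam * ∫ x in Icc (0:ℝ) 1, a x)) := by
    have h3 := exp_expand hkr1
    rwa [show -((n:ℝ) * lam * -∫ x in Icc (0:ℝ) 1, a x)
      = (n:ℝ) * lam * ∫ x in Icc (0:ℝ) 1, a x by ring] at h3
  have hE2 : Tendsto (fun k : ℕ => (k:ℝ) * (1 - Real.exp ((n:ℝ) * lam * I2 k))) atTop
      (nhds ((n:ℝ) * lam * ∫ x in Icc (0:ℝ) 1, b x)) := by
    have h3 := exp_expand hkr2
    rwa [show -((n:ℝ) * lam * -∫ x in Icc (0:ℝ) 1, b x)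
      = (n:ℝ) * lam * ∫ x in Icc (0:ℝ) 1, b x by ring] at h3
  have hr1z : Tendsto (fun k : ℕ => (n:ℝ) * lam * I1 k) atTop (nhds 0) := r_to_zero hkr1
  have hr2z : Tendsto (fun k : ℕ => (n:ℝ) * lam * I2 k) atTop (nhds 0) := r_to_zero hkr2
  have hkK : Tendsto (fun k : ℕ => (k:ℝ)^2 * ((n:ℝ) * lam * Ip k)) atTop
      (nhds ((n:ℝ) * lam * ∫ x in Icc (0:ℝ) 1, a x * b x)) := by
    have h2 := (int_lim_two hma hmb h0a h0b hCa hCb).const_mul ((n:ℝ) * lam)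
    refine h2.congr fun k => ?_
    simp only [hIp]
    ring
  have hKexp : Tendsto (fun k : ℕ => (k:ℝ)^2 * (Real.exp ((n:ℝ)*lam*Ip k) - 1)) atTop
      (nhds ((n:ℝ)*lam* ∫ x in Icc (0:ℝ) 1, a x * b x)) := exp_expand2 hkK
  have hexp12 : Tendsto (fun k : ℕ =>
      Real.exp ((n:ℝ)*lam*I1 k + (n:ℝ)*lam*I2 k)) atTop (nhds 1) := by
    have h4 := hr1z.add hr2z
    rw [add_zero] at h4
    have h5 := (Real.continuous_exp.tendsto 0).comp h4
    simpa [Real.exp_zero, Function.comp_def] using h5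
  -- decomposition of the joint exponent
  have hI12eq : ∀ k : ℕ,
      (∫ x in Icc (0:ℝ) 1, (Real.exp ((Real.exp (-1/(k:ℝ)) - 1) * (a x + b x)) - 1))
        = I1 k + I2 k + Ip k := by
    intro k
    have ia : IntegrableOn (fun x => Real.exp ((Real.exp (-1/(k:ℝ)) - 1) * a x) - 1)
        (Icc (0:ℝ) 1) :=
      integrableOn_Icc_of_bounded
        ((Real.measurable_exp.comp (hma.const_mul _)).sub measurable_const)
        (fun x => exp_term_bound k (h0a x) (hCa x))
    have ib : IntegrableOn (fun x => Real.exp ((Real.exp (-1/(k:ℝ)) - 1) * b x) - 1)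
        (Icc (0:ℝ) 1) :=
      integrableOn_Icc_of_bounded
        ((Real.measurable_exp.comp (hmb.const_mul _)).sub measurable_const)
        (fun x => exp_term_bound k (h0b x) (hCb x))
    have ip : IntegrableOn (fun x => (Real.exp ((Real.exp (-1/(k:ℝ)) - 1) * a x) - 1)
        * (Real.exp ((Real.exp (-1/(k:ℝ)) - 1) * b x) - 1)) (Icc (0:ℝ) 1) :=
      integrableOn_Icc_of_bounded
        (((Real.measurable_exp.comp (hma.const_mul _)).sub measurable_const).mul
          ((Real.measurable_exp.comp (hmb.const_mul _)).sub measurable_const))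
        (fun x => by
          rw [abs_mul]
          exact mul_le_mul (exp_term_bound k (h0a x) (hCa x))
            (exp_term_bound k (h0b x) (hCb x)) (abs_nonneg _) model.mu_pos.le)
    have hpt : ∀ x : ℝ, Real.exp ((Real.exp (-1/(k:ℝ)) - 1) * (a x + b x)) - 1
        = (Real.exp ((Real.exp (-1/(k:ℝ)) - 1) * a x) - 1)
          + ((Real.exp ((Real.exp (-1/(k:ℝ)) - 1) * b x) - 1)
            + (Real.exp ((Real.exp (-1/(k:ℝ)) - 1) * a x) - 1)
              * (Real.exp ((Real.exp (-1/(k:ℝ)) - 1) * b x) - 1)) := by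
      intro x
      rw [mul_add, Real.exp_add]
      ring
    have ibp : IntegrableOn (fun x => (Real.exp ((Real.exp (-1/(k:ℝ)) - 1) * b x) - 1)
        + (Real.exp ((Real.exp (-1/(k:ℝ)) - 1) * a x) - 1)
          * (Real.exp ((Real.exp (-1/(k:ℝ)) - 1) * b x) - 1)) (Icc (0:ℝ) 1) := ib.add ip
    rw [integral_congr_ae (Eventually.of_forall hpt), integral_add ia ibp,
      integral_add ib ip]
    simp only [hI1, hI2, hIp]
    ring
  -- the approximating sequence and its integral
  set g : ℕ → Ω → ℝ := fun k ω =>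
    ((k:ℝ) * (1 - Real.exp (-((N ω B₁).toReal / (k:ℝ))))) *
    ((k:ℝ) * (1 - Real.exp (-((N ω B₂).toReal / (k:ℝ))))) with hg
  have hgint : ∀ k : ℕ, ∫ ω, g k ω ∂P
      = ((k:ℝ) * (1 - Real.exp ((n:ℝ)*lam*I1 k))) * ((k:ℝ) * (1 - Real.exp ((n:ℝ)*lam*I2 k)))
        + Real.exp ((n:ℝ)*lam*I1 k + (n:ℝ)*lam*I2 k)
          * ((k:ℝ)^2 * (Real.exp ((n:ℝ)*lam*Ip k) - 1)) := by
    intro k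
    have iA := exp_neg_div_integrable model hB₁meas k
    have iB := exp_neg_div_integrable model hB₂meas k
    have iAB : Integrable
        (fun ω => Real.exp (-((N ω B₁).toReal / (k:ℝ)) - (N ω B₂).toReal / (k:ℝ))) P := by
      refine (integrable_const 1).mono'
        ((Real.measurable_exp.comp
          ((hX1.div_const _).neg.sub (hX2.div_const _))).aestronglyMeasurable)
        (Eventually.of_forall fun ω => ?_)
      rw [Real.norm_eq_abs, abs_of_nonneg (Real.exp_nonneg _)]
      refine Real.exp_le_one_iff.mpr ?_
      have h1 : 0 ≤ (N ω B₁).toReal / (k:ℝ) :=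
        div_nonneg ENNReal.toReal_nonneg (Nat.cast_nonneg k)
      have h2 : 0 ≤ (N ω B₂).toReal / (k:ℝ) :=
        div_nonneg ENNReal.toReal_nonneg (Nat.cast_nonneg k)
      linarith
    have hgpt : ∀ ω, g k ω = (k:ℝ)^2 *
        ((1 - Real.exp (-((N ω B₁).toReal / (k:ℝ))))
          - (Real.exp (-((N ω B₂).toReal / (k:ℝ)))
            - Real.exp (-((N ω B₁).toReal / (k:ℝ)) - (N ω B₂).toReal / (k:ℝ)))) := by
      intro ω
      have hAB : Real.exp (-((N ω B₁).toReal / (k:ℝ)) - (N ω B₂).toReal / (k:ℝ))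
          = Real.exp (-((N ω B₁).toReal / (k:ℝ))) * Real.exp (-((N ω B₂).toReal / (k:ℝ))) := by
        rw [← Real.exp_add, sub_eq_add_neg]
      rw [hg, hAB]
      ring
    have i1A : Integrable (fun ω => 1 - Real.exp (-((N ω B₁).toReal/(k:ℝ)))) P :=
      (integrable_const 1).sub iA
    have iBAB : Integrable (fun ω => Real.exp (-((N ω B₂).toReal/(k:ℝ)))
        - Real.exp (-((N ω B₁).toReal/(k:ℝ)) - (N ω B₂).toReal/(k:ℝ))) P := iB.sub iAB
    rw [integral_congr_ae (Eventually.of_forall hgpt), integral_const_mul,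
      integral_sub i1A iBAB,
      integral_sub (integrable_const 1) iA, integral_sub iB iAB, integral_const,
      probReal_univ, smul_eq_mul, mul_one,
      lap_single model hB₁meas hB₁bdd k, lap_single model hB₂meas hB₂bdd k,
      lap_double model hB₁meas hB₂meas hB₁bdd hB₂bdd hdisj k]
    have h12 : (n:ℝ) * lam * ∫ x in Icc (0:ℝ) 1,
        (Real.exp ((Real.exp (-1/(k:ℝ)) - 1) * (mu * QB σ f B₁ x + mu * QB σ f B₂ x)) - 1)
        = (n:ℝ)*lam*I1 k + (n:ℝ)*lam*I2 k + (n:ℝ)*lam*Ip k := by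
      rw [show (fun x => Real.exp ((Real.exp (-1/(k:ℝ)) - 1)
          * (mu * QB σ f B₁ x + mu * QB σ f B₂ x)) - 1)
          = (fun x => Real.exp ((Real.exp (-1/(k:ℝ)) - 1) * (a x + b x)) - 1) from rfl]
      rw [hI12eq k]
      ring
    rw [h12]
    have hA1 : (n:ℝ) * lam * ∫ x in Icc (0:ℝ) 1,
        (Real.exp ((Real.exp (-1/(k:ℝ)) - 1) * (mu * QB σ f B₁ x)) - 1) = (n:ℝ)*lam*I1 k := rfl
    have hA2 : (n:ℝ) * lam * ∫ x in Icc (0:ℝ) 1,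
        (Real.exp ((Real.exp (-1/(k:ℝ)) - 1) * (mu * QB σ f B₂ x)) - 1) = (n:ℝ)*lam*I2 k := rfl
    rw [hA1, hA2, Real.exp_add, Real.exp_add]
    ring
  have hL : Tendsto (fun k : ℕ => ∫ ω, g k ω ∂P) atTop
      (nhds (((n:ℝ)*lam* ∫ x in Icc (0:ℝ) 1, a x) * ((n:ℝ)*lam* ∫ x in Icc (0:ℝ) 1, b x)
        + (n:ℝ)*lam* ∫ x in Icc (0:ℝ) 1, a x * b x)) := by
    have h6 := (hE1.mul hE2).add (hexp12.mul hKexp)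
    rw [one_mul] at h6
    exact h6.congr fun k => (hgint k).symm
  have hX12 := integral_sandwich (P := P) (hX1.mul hX2).aestronglyMeasurable
    (fun ω => mul_nonneg ENNReal.toReal_nonneg ENNReal.toReal_nonneg)
    (fun k => ((((hX1.div_const _).neg.exp.const_sub 1).const_mul _).mul
      (((hX2.div_const _).neg.exp.const_sub 1).const_mul _)).aestronglyMeasurable)
    (fun k ω => mul_nonneg (approx_nonneg k ENNReal.toReal_nonneg)
      (approx_nonneg k ENNReal.toReal_nonneg))
    (fun k ω => mul_le_mul (approx_le k ENNReal.toReal_nonneg)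
      (approx_le k ENNReal.toReal_nonneg) (approx_nonneg k ENNReal.toReal_nonneg)
      ENNReal.toReal_nonneg)
    (fun ω => (approx_tendsto ENNReal.toReal_nonneg).mul (approx_tendsto ENNReal.toReal_nonneg))
    (fun k => ⟨(k:ℝ) * (k:ℝ), fun ω => mul_le_mul (approx_le_nat k ENNReal.toReal_nonneg)
      (approx_le_nat k ENNReal.toReal_nonneg) (approx_nonneg k ENNReal.toReal_nonneg)
      (Nat.cast_nonneg k)⟩)
    hL
  simp only [Pi.mul_apply] at hX12
  have hQa : ∫ x in Icc (0:ℝ) 1, a x = mu * Qker σ f (Icc (0:ℝ) 1) B₁ := by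
    rw [Qker_eq_QB]
    simp only [ha]
    exact integral_const_mul mu _
  have hQb : ∫ x in Icc (0:ℝ) 1, b x = mu * Qker σ f (Icc (0:ℝ) 1) B₂ := by
    rw [Qker_eq_QB]
    simp only [hb]
    exact integral_const_mul mu _
  have hQab : ∫ x in Icc (0:ℝ) 1, a x * b x
      = mu^2 * Q2ker σ f (Icc (0:ℝ) 1) B₁ B₂ := by
    rw [Q2ker_eq_QB, ← integral_const_mul]
    refine integral_congr_ae (Eventually.of_forall fun x => ?_)
    simp only [ha, hb]
    ring
  refine ⟨?_, ?_, claim3⟩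
  · rw [hX12, hQa, hQb, hQab]
    ring
  · rw [hX12, claim3 B₁ hB₁meas hB₁bdd, claim3 B₂ hB₂meas hB₂bdd, hQa, hQb, hQab]
    ring
end

section
/- If A₁, A₂ ⊆ [0,1] are disjoint intervals and B ⊆ ℝ is a bounded interval, then E[M(A₁) M(A₂) N(B)] = n³λ³μ |A₁||A₂| Q_σ([0,1],B) + n²λ²μ |A₂| Q_σ(A₁,B) + n²λ²μ |A₁| Q_σ(A₂,B). -/
open MeasureTheory Filter Set

namespace DispersalAux

open MeasureTheory Filter Set

lemma tendsto_expSlope :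
    Tendsto (fun v : ℝ => if v = 0 then 1 else (Real.exp v - 1) / v) (nhds 0) (nhds 1) := by
  rw [← nhdsNE_sup_pure (0 : ℝ)]
  rw [tendsto_sup]
  constructor
  · have h := hasDerivAt_iff_tendsto_slope.1 (Real.hasDerivAt_exp 0)
    simp only [Real.exp_zero] at h
    refine h.congr' ?_
    filter_upwards [self_mem_nhdsWithin] with v hv
    simp only [mem_compl_iff, mem_singleton_iff] at hv
    simp [slope, hv, div_eq_inv_mul]
  · have h0 : (if (0:ℝ) = 0 then (1:ℝ) else (Real.exp 0 - 1) / 0) = 1 := by simp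
    simpa [h0] using (tendsto_pure_nhds
      (fun v : ℝ => if v = 0 then 1 else (Real.exp v - 1) / v) 0)

/-- Key limit lemma: if `δ t / r t → L` and `δ → 0`, then `(exp (δ t) - 1) / r t → L`. -/
lemma exp_ratio_tendsto {L : ℝ} {l : Filter ℝ} {δ r : ℝ → ℝ}
    (hδ0 : Tendsto δ l (nhds 0)) (h : Tendsto (fun t => δ t / r t) l (nhds L)) :
    Tendsto (fun t => (Real.exp (δ t) - 1) / r t) l (nhds L) := by
  have key : ∀ t, (Real.exp (δ t) - 1) / r t
      = (if δ t = 0 then 1 else (Real.exp (δ t) - 1) / δ t) * (δ t / r t) := by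
    intro t
    by_cases hd : δ t = 0
    · simp [hd]
    · rw [if_neg hd, div_mul_div_comm, mul_comm (Real.exp (δ t) - 1) (δ t),
        mul_div_mul_left _ _ hd]
  have h2 := (tendsto_expSlope.comp hδ0).mul h
  rw [one_mul] at h2
  exact h2.congr fun t => (key t).symm

lemma exp_sub_one_le {c : ℝ} : Real.exp c - 1 ≤ c * Real.exp c := by
  have h2 : 1 - c ≤ Real.exp (-c) := by
    have := Real.add_one_le_exp (-c); linarith
  have h1 : (1 - c) * Real.exp c ≤ 1 := by
    calc (1 - c) * Real.exp c ≤ Real.exp (-c) * Real.exp c :=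
          mul_le_mul_of_nonneg_right h2 (Real.exp_pos c).le
      _ = 1 := by rw [← Real.exp_add]; simp
  nlinarith

lemma integrable_of_bound {α : Type*} [MeasurableSpace α] (μ : Measure α) [IsFiniteMeasure μ]
    {g : α → ℝ} (hg : Measurable g) (C : ℝ) (hC : ∀ x, |g x| ≤ C) : Integrable g μ :=
  (integrable_const C).mono' hg.aestronglyMeasurable (Eventually.of_forall fun x => by
    simpa using hC x)

noncomputable section

lemma fdil_meas_s3 {σ : ℝ} {f : ℝ → ℝ} (hf : Measurable f) : Measurable (fdil σ f) :=
  (hf.comp (measurable_id.div_const σ)).const_mul _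

lemma fdil_nonneg_s3 {σ : ℝ} {f : ℝ → ℝ} (hσ : 0 < σ) (hf : ∀ z, 0 ≤ f z) :
    ∀ z, 0 ≤ fdil σ f z :=
  fun _ => mul_nonneg (inv_nonneg.2 hσ.le) (hf _)

lemma fdil_integrable {σ : ℝ} {f : ℝ → ℝ} (hσ : 0 < σ) (hf : Measurable f)
    (hprob : ∫ z, f z = 1) : Integrable (fdil σ f) := by
  have hfi : Integrable f := by
    by_contra h
    rw [integral_undef h] at hprob
    norm_num at hprob
  exact (hfi.comp_div hσ.ne').const_mul _

lemma fdil_integral_s3 {σ : ℝ} {f : ℝ → ℝ} (hσ : 0 < σ) (hf : Measurable f)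
    (hprob : ∫ z, f z = 1) : ∫ z, fdil σ f z = 1 := by
  unfold fdil
  rw [integral_const_mul, MeasureTheory.Measure.integral_comp_div f σ, hprob]
  simp [abs_of_pos hσ, inv_mul_cancel₀ hσ.ne']

/-- `q x = ∫_B f_σ(y - x) dy`. -/
def qB (σ : ℝ) (f : ℝ → ℝ) (B : Set ℝ) (x : ℝ) : ℝ := ∫ y in B, fdil σ f (y - x)

/-- `Psi σ f B A v = ∫_A exp (v q(x)) dx`. -/
def Psi (σ : ℝ) (f : ℝ → ℝ) (B A : Set ℝ) (v : ℝ) : ℝ :=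
  ∫ x in A, Real.exp (v * qB σ f B x)

lemma qB_meas {σ : ℝ} {f : ℝ → ℝ} (hf : Measurable f) (B : Set ℝ) :
    Measurable (qB σ f B) := by
  have h : StronglyMeasurable (fun p : ℝ × ℝ => fdil σ f (p.2 - p.1)) :=
    ((fdil_meas_s3 hf).comp (measurable_snd.sub measurable_fst)).stronglyMeasurable
  exact (h.integral_prod_right' (ν := volume.restrict B)).measurable

lemma qB_nonneg {σ : ℝ} {f : ℝ → ℝ} (hσ : 0 < σ) (hf0 : ∀ z, 0 ≤ f z) (B : Set ℝ) (x : ℝ) :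
    0 ≤ qB σ f B x :=
  setIntegral_nonneg_of_ae_restrict (Eventually.of_forall fun _ => fdil_nonneg_s3 hσ hf0 _)

lemma qB_le_one {σ : ℝ} {f : ℝ → ℝ} (hσ : 0 < σ) (hf : Measurable f) (hf0 : ∀ z, 0 ≤ f z)
    (hprob : ∫ z, f z = 1) (B : Set ℝ) (x : ℝ) : qB σ f B x ≤ 1 := by
  have hint : Integrable (fun y => fdil σ f (y - x)) :=
    (fdil_integrable hσ hf hprob).comp_sub_right x
  calc qB σ f B x ≤ ∫ y, fdil σ f (y - x) :=
        setIntegral_le_integral hint (Eventually.of_forall fun _ => fdil_nonneg_s3 hσ hf0 _)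
    _ = ∫ z, fdil σ f z := integral_sub_right_eq_self (fdil σ f) x
    _ = 1 := fdil_integral_s3 hσ hf hprob

/-- `(∫_A e^{v q} - |A|)/v → ∫_A q` as `v → 0⁺`, for `0 ≤ q ≤ 1` on a finite-measure set. -/
lemma ratio_tendsto_integral {A : Set ℝ} (hA : MeasurableSet A) (hAfin : volume A ≠ ⊤)
    {q : ℝ → ℝ} (hq : Measurable q) (hq0 : ∀ x, 0 ≤ q x) (hq1 : ∀ x, q x ≤ 1) :
    Tendsto (fun v => ((∫ x in A, Real.exp (v * q x)) - (volume A).toReal) / v)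
      (nhdsWithin 0 (Ioi 0)) (nhds (∫ x in A, q x)) := by
  haveI : IsFiniteMeasure (volume.restrict A) :=
    ⟨by rwa [Measure.restrict_apply_univ, lt_top_iff_ne_top]⟩
  have hmain : Tendsto (fun v => ∫ x in A, (Real.exp (v * q x) - 1) / v)
      (nhdsWithin 0 (Ioi 0)) (nhds (∫ x in A, q x)) := by
    apply tendsto_integral_filter_of_dominated_convergence
      (bound := fun _ => Real.exp 1)
    · filter_upwards with v
      exact (((measurable_const.mul hq).exp.sub measurable_const).div_const v).aestronglyMeasurable
    · filter_upwards [Ioc_mem_nhdsGT (by norm_num : (0:ℝ) < 1)] with v hv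
      refine Eventually.of_forall fun x => ?_
      have hv0 : 0 < v := hv.1
      have hc0 : 0 ≤ v * q x := mul_nonneg hv0.le (hq0 x)
      have hc1 : v * q x ≤ 1 := by
        calc v * q x ≤ v * 1 := mul_le_mul_of_nonneg_left (hq1 x) hv0.le
        _ ≤ 1 := by linarith [hv.2]
      have h1 : Real.exp (v * q x) - 1 ≤ v * Real.exp 1 := by
        calc Real.exp (v * q x) - 1 ≤ (v * q x) * Real.exp (v * q x) := exp_sub_one_le
          _ ≤ (v * 1) * Real.exp 1 := by
              apply mul_le_mul (by nlinarith [hq1 x, hq0 x]) (Real.exp_le_exp.2 hc1)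
                (Real.exp_pos _).le
              positivity
          _ = v * Real.exp 1 := by ring
      have h0 : 0 ≤ Real.exp (v * q x) - 1 := by
        have := Real.one_le_exp hc0; linarith
      rw [Real.norm_eq_abs, abs_of_nonneg (div_nonneg h0 hv0.le)]
      rw [div_le_iff₀ hv0]
      linarith [h1]
    · exact integrable_const _
    · refine Eventually.of_forall fun x => ?_
      apply exp_ratio_tendsto
      · have h3 : Tendsto (fun v : ℝ => v * q x) (nhds 0) (nhds 0) := by
          have := (tendsto_id (x := nhds (0:ℝ))).mul_const (q x)
          simpa using this
        exact h3.mono_left nhdsWithin_le_nhds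
      · refine Tendsto.congr' ?_ tendsto_const_nhds
        filter_upwards [self_mem_nhdsWithin] with v hv
        rw [mul_comm, mul_div_assoc, div_self (ne_of_gt hv), mul_one]
  refine hmain.congr' ?_
  filter_upwards [self_mem_nhdsWithin] with v hv
  have hv0 : (0:ℝ) < v := hv
  have hint : Integrable (fun x => Real.exp (v * q x)) (volume.restrict A) := by
    refine (integrable_const (Real.exp |v|)).mono'
      ((measurable_const.mul hq).exp.aestronglyMeasurable) (Eventually.of_forall fun x => ?_)
    rw [Real.norm_eq_abs, abs_of_pos (Real.exp_pos _)]
    apply Real.exp_le_exp.2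
    calc v * q x ≤ |v * q x| := le_abs_self _
      _ = |v| * |q x| := abs_mul _ _
      _ ≤ |v| * 1 := by
          apply mul_le_mul_of_nonneg_left _ (abs_nonneg v)
          rw [abs_of_nonneg (hq0 x)]; exact hq1 x
      _ = |v| := mul_one _
  rw [integral_div]
  congr 1
  rw [integral_sub hint (integrable_const 1)]
  simp [Measure.restrict_apply_univ, measureReal_def]

theorem corner_integral
    {Ω : Type*} [MeasurableSpace Ω] (P : Measure Ω)
    (n : ℕ) (lam mu σ : ℝ) (f : ℝ → ℝ) (M N : Ω → Measure ℝ)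
    (model : IsDispersalModel P n lam mu σ f M N)
    (A₁ A₂ B : Set ℝ)
    (hA₁meas : MeasurableSet A₁) (hA₂meas : MeasurableSet A₂)
    (hA₁sub : A₁ ⊆ Set.Icc (0:ℝ) 1) (hA₂sub : A₂ ⊆ Set.Icc (0:ℝ) 1)
    (hAdisj : Disjoint A₁ A₂)
    (hBmeas : MeasurableSet B) (hBbdd : Bornology.IsBounded B) (c₁ c₂ c₃ : ℝ) :
    Integrable (fun ω => Real.exp (c₁ * (M ω A₁).toReal + c₂ * (M ω A₂).toReal
        + c₃ * (N ω B).toReal)) P ∧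
    ∫ ω, Real.exp (c₁ * (M ω A₁).toReal + c₂ * (M ω A₂).toReal + c₃ * (N ω B).toReal) ∂P
      = Real.exp ((n : ℝ) * lam *
          ((Psi σ f B (Set.Icc (0:ℝ) 1) (mu * (Real.exp c₃ - 1)) - 1)
            + (Real.exp c₁ - 1) * Psi σ f B A₁ (mu * (Real.exp c₃ - 1))
            + (Real.exp c₂ - 1) * Psi σ f B A₂ (mu * (Real.exp c₃ - 1)))) := by
  classical
  unfold Psi
  set v : ℝ := mu * (Real.exp c₃ - 1) with hv
  set g : ℝ → ℝ := fun x => A₁.indicator (fun _ => c₁) x + A₂.indicator (fun _ => c₂) x with hg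
  set h : ℝ → ℝ := B.indicator (fun _ => c₃) with hh
  have hgmeas : Measurable g :=
    (measurable_const.indicator hA₁meas).add (measurable_const.indicator hA₂meas)
  have hhmeas : Measurable h := measurable_const.indicator hBmeas
  have hgbd : ∃ c, ∀ x, |g x| ≤ c := by
    refine ⟨|c₁| + |c₂|, fun x => ?_⟩
    have h1 : |A₁.indicator (fun _ => c₁) x| ≤ |c₁| := by
      by_cases hx : x ∈ A₁ <;> simp [Set.indicator, hx, abs_nonneg]
    have h2 : |A₂.indicator (fun _ => c₂) x| ≤ |c₂| := by
      by_cases hx : x ∈ A₂ <;> simp [Set.indicator, hx, abs_nonneg]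
    calc |g x| ≤ |A₁.indicator (fun _ => c₁) x| + |A₂.indicator (fun _ => c₂) x| := abs_add_le _ _
      _ ≤ |c₁| + |c₂| := add_le_add h1 h2
  have hhbd : ∃ c, ∀ y, |h y| ≤ c := by
    refine ⟨|c₃|, fun y => ?_⟩
    by_cases hy : y ∈ B <;> simp [hh, Set.indicator, hy, abs_nonneg]
  have hhsupp : ∃ R, ∀ y : ℝ, R < |y| → h y = 0 := by
    obtain ⟨R, hR⟩ := hBbdd.subset_closedBall 0
    refine ⟨R, fun y hy => ?_⟩
    have hyB : y ∉ B := by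
      intro hyB
      have := hR hyB
      rw [Metric.mem_closedBall, Real.dist_eq, sub_zero] at this
      linarith
    simp [hh, Set.indicator, hyB]
  have key := model.laplace g h hgmeas hhmeas hgbd hhbd hhsupp
  have hlhs : (fun ω => Real.exp ((∫ x, g x ∂(M ω)) + ∫ y, h y ∂(N ω)))
      = fun ω => Real.exp (c₁ * (M ω A₁).toReal + c₂ * (M ω A₂).toReal
          + c₃ * (N ω B).toReal) := by
    funext ω
    haveI := model.M_finite ω
    have hM : (∫ x, g x ∂(M ω)) = c₁ * (M ω A₁).toReal + c₂ * (M ω A₂).toReal := by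
      rw [hg, integral_add ((integrable_const c₁).indicator hA₁meas)
        ((integrable_const c₂).indicator hA₂meas),
        integral_indicator_const _ hA₁meas, integral_indicator_const _ hA₂meas]
      simp [mul_comm, measureReal_def]
    have hN : (∫ y, h y ∂(N ω)) = c₃ * (N ω B).toReal := by
      rw [hh, integral_indicator_const _ hBmeas]
      simp [mul_comm, measureReal_def]
    rw [hM, hN]
  rw [hlhs] at key
  have hinner : ∀ x : ℝ,
      (mu * ∫ y, (Real.exp (h y) - 1) * fdil σ f (y - x)) = v * qB σ f B x := by
    intro x
    have hind : (fun y => (Real.exp (h y) - 1) * fdil σ f (y - x))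
        = B.indicator (fun y => (Real.exp c₃ - 1) * fdil σ f (y - x)) := by
      funext y
      by_cases hy : y ∈ B <;> simp [hh, Set.indicator, hy]
    rw [hind, integral_indicator hBmeas, integral_const_mul, hv, qB]
    ring
  have hsplitpt : ∀ x : ℝ,
      Real.exp (g x + v * qB σ f B x) - 1
        = (Real.exp (v * qB σ f B x) - 1)
          + (Real.exp c₁ - 1) * A₁.indicator (fun x => Real.exp (v * qB σ f B x)) x
          + (Real.exp c₂ - 1) * A₂.indicator (fun x => Real.exp (v * qB σ f B x)) x := by
    intro x
    by_cases hx1 : x ∈ A₁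
    · have hx2 : x ∉ A₂ := fun hx2 => (Set.disjoint_left.1 hAdisj hx1 hx2)
      simp [hg, Set.indicator, hx1, hx2, Real.exp_add]
      ring
    · by_cases hx2 : x ∈ A₂
      · simp [hg, Set.indicator, hx1, hx2, Real.exp_add]
        ring
      · simp [hg, Set.indicator, hx1, hx2]
  have hqmeas := qB_meas (σ := σ) model.f_meas B
  have hq0 := qB_nonneg (σ := σ) model.sigma_pos model.f_nonneg B
  have hq1 := qB_le_one (σ := σ) model.sigma_pos model.f_meas model.f_nonneg model.f_prob B
  have hexpq_bd : ∀ x, |Real.exp (v * qB σ f B x)| ≤ Real.exp |v| := by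
    intro x
    rw [abs_of_pos (Real.exp_pos _)]
    apply Real.exp_le_exp.2
    calc v * qB σ f B x ≤ |v * qB σ f B x| := le_abs_self _
      _ = |v| * |qB σ f B x| := abs_mul _ _
      _ ≤ |v| * 1 := by
          apply mul_le_mul_of_nonneg_left _ (abs_nonneg v)
          rw [abs_of_nonneg (hq0 x)]; exact hq1 x
      _ = |v| := mul_one _
  haveI : IsFiniteMeasure (volume.restrict (Set.Icc (0:ℝ) 1)) := by
    constructor
    rw [Measure.restrict_apply_univ]
    simp [Real.volume_Icc]
  have hexpq_meas : Measurable (fun x => Real.exp (v * qB σ f B x)) :=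
    (measurable_const.mul hqmeas).exp
  have hint1 : Integrable (fun x => Real.exp (v * qB σ f B x) - 1)
      (volume.restrict (Set.Icc (0:ℝ) 1)) := by
    apply integrable_of_bound _ (hexpq_meas.sub measurable_const) (Real.exp |v| + 1)
    intro x
    calc |Real.exp (v * qB σ f B x) - 1| ≤ |Real.exp (v * qB σ f B x)| + |(1:ℝ)| := abs_sub _ _
      _ ≤ Real.exp |v| + 1 := by simpa using add_le_add (hexpq_bd x) (le_refl (1:ℝ))
  have hint2 : Integrable (fun x => (Real.exp c₁ - 1)
      * A₁.indicator (fun x => Real.exp (v * qB σ f B x)) x)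
      (volume.restrict (Set.Icc (0:ℝ) 1)) := by
    apply integrable_of_bound _ ((hexpq_meas.indicator hA₁meas).const_mul _)
      (|Real.exp c₁ - 1| * Real.exp |v|)
    intro x
    rw [abs_mul]
    apply mul_le_mul_of_nonneg_left _ (abs_nonneg _)
    by_cases hx : x ∈ A₁
    · simpa [Set.indicator, hx] using hexpq_bd x
    · simp [Set.indicator, hx, (Real.exp_pos |v|).le]
  have hint3 : Integrable (fun x => (Real.exp c₂ - 1)
      * A₂.indicator (fun x => Real.exp (v * qB σ f B x)) x)
      (volume.restrict (Set.Icc (0:ℝ) 1)) := by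
    apply integrable_of_bound _ ((hexpq_meas.indicator hA₂meas).const_mul _)
      (|Real.exp c₂ - 1| * Real.exp |v|)
    intro x
    rw [abs_mul]
    apply mul_le_mul_of_nonneg_left _ (abs_nonneg _)
    by_cases hx : x ∈ A₂
    · simpa [Set.indicator, hx] using hexpq_bd x
    · simp [Set.indicator, hx, (Real.exp_pos |v|).le]
  have hset : (∫ x in Set.Icc (0:ℝ) 1,
        (Real.exp (g x + mu * ∫ y, (Real.exp (h y) - 1) * fdil σ f (y - x)) - 1))
      = ((∫ x in Set.Icc (0:ℝ) 1, Real.exp (v * qB σ f B x)) - 1)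
        + (Real.exp c₁ - 1) * (∫ x in A₁, Real.exp (v * qB σ f B x))
        + (Real.exp c₂ - 1) * (∫ x in A₂, Real.exp (v * qB σ f B x)) := by
    have step1 : (∫ x in Set.Icc (0:ℝ) 1,
          (Real.exp (g x + mu * ∫ y, (Real.exp (h y) - 1) * fdil σ f (y - x)) - 1))
        = ∫ x in Set.Icc (0:ℝ) 1,
            ((Real.exp (v * qB σ f B x) - 1)
              + (Real.exp c₁ - 1) * A₁.indicator (fun x => Real.exp (v * qB σ f B x)) x
              + (Real.exp c₂ - 1) * A₂.indicator (fun x => Real.exp (v * qB σ f B x)) x) := by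
      apply integral_congr_ae
      apply Eventually.of_forall
      intro x
      simp only [hinner, hsplitpt]
    have h12 : Integrable (fun x => (Real.exp (v * qB σ f B x) - 1)
        + (Real.exp c₁ - 1) * A₁.indicator (fun x => Real.exp (v * qB σ f B x)) x)
        (volume.restrict (Set.Icc (0:ℝ) 1)) := hint1.add hint2
    rw [step1, integral_add h12 hint3, integral_add hint1 hint2]
    have e1 : (∫ x in Set.Icc (0:ℝ) 1, (Real.exp (v * qB σ f B x) - 1))
        = (∫ x in Set.Icc (0:ℝ) 1, Real.exp (v * qB σ f B x)) - 1 := by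
      have hintexp : Integrable (fun x => Real.exp (v * qB σ f B x))
          (volume.restrict (Set.Icc (0:ℝ) 1)) :=
        integrable_of_bound _ hexpq_meas (Real.exp |v|) hexpq_bd
      rw [integral_sub hintexp (integrable_const 1)]
      simp [Real.volume_Icc]
    have e2 : (∫ x in Set.Icc (0:ℝ) 1, (Real.exp c₁ - 1)
          * A₁.indicator (fun x => Real.exp (v * qB σ f B x)) x)
        = (Real.exp c₁ - 1) * (∫ x in A₁, Real.exp (v * qB σ f B x)) := by
      rw [integral_const_mul, setIntegral_indicator hA₁meas,
        Set.inter_eq_self_of_subset_right hA₁sub]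
    have e3 : (∫ x in Set.Icc (0:ℝ) 1, (Real.exp c₂ - 1)
          * A₂.indicator (fun x => Real.exp (v * qB σ f B x)) x)
        = (Real.exp c₂ - 1) * (∫ x in A₂, Real.exp (v * qB σ f B x)) := by
      rw [integral_const_mul, setIntegral_indicator hA₂meas,
        Set.inter_eq_self_of_subset_right hA₂sub]
    rw [e1, e2, e3]
  rw [hset] at key
  refine ⟨?_, key⟩
  by_contra hni
  rw [integral_undef hni] at key
  exact (Real.exp_pos _).ne' key.symm

end
end DispersalAux

set_option maxHeartbeats 2000000 in
/-- Lemma 16(ii): mixed third moment `E[M(A₁)M(A₂)N(B)]`. -/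
theorem dispersal_third_moment_MMN
    {Ω : Type*} [MeasurableSpace Ω] (P : Measure Ω)
    (n : ℕ) (lam mu σ : ℝ) (f : ℝ → ℝ) (M N : Ω → Measure ℝ)
    (model : IsDispersalModel P n lam mu σ f M N)
    (A₁ A₂ B : Set ℝ)
    (hA₁meas : MeasurableSet A₁) (hA₂meas : MeasurableSet A₂)
    (hA₁int : A₁.OrdConnected) (hA₂int : A₂.OrdConnected)
    (hA₁sub : A₁ ⊆ Set.Icc (0:ℝ) 1) (hA₂sub : A₂ ⊆ Set.Icc (0:ℝ) 1)
    (hAdisj : Disjoint A₁ A₂)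
    (hBmeas : MeasurableSet B) (hBint : B.OrdConnected) (hBbdd : Bornology.IsBounded B) :
    ∫ ω, (M ω A₁).toReal * (M ω A₂).toReal * (N ω B).toReal ∂P
      = (n : ℝ)^3 * lam^3 * mu * (volume A₁).toReal * (volume A₂).toReal
          * Qker σ f (Set.Icc (0:ℝ) 1) B
        + (n : ℝ)^2 * lam^2 * mu * (volume A₂).toReal * Qker σ f A₁ B
        + (n : ℝ)^2 * lam^2 * mu * (volume A₁).toReal * Qker σ f A₂ B := by
  classical
  haveI := model.prob
  open DispersalAux in
  set l : Filter ℝ := nhdsWithin (0:ℝ) (Set.Ioi 0) with hl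
  set X : Ω → ℝ := fun ω => (M ω A₁).toReal with hXdef
  set Y : Ω → ℝ := fun ω => (M ω A₂).toReal with hYdef
  set Z : Ω → ℝ := fun ω => (N ω B).toReal with hZdef
  set u : ℝ → ℝ := fun t => mu * (Real.exp t - 1) with hu
  set Ψ : ℝ → ℝ := DispersalAux.Psi σ f B (Set.Icc (0:ℝ) 1) with hΨd
  set Ψ₁ : ℝ → ℝ := DispersalAux.Psi σ f B A₁ with hΨ₁d
  set Ψ₂ : ℝ → ℝ := DispersalAux.Psi σ f B A₂ with hΨ₂d
  set w₁ : ℝ := (volume A₁).toReal with hw₁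
  set w₂ : ℝ := (volume A₂).toReal with hw₂
  set Q : ℝ := Qker σ f (Set.Icc (0:ℝ) 1) B with hQ
  set Q₁ : ℝ := Qker σ f A₁ B with hQ₁
  set Q₂ : ℝ := Qker σ f A₂ B with hQ₂
  set p : ℝ → ℝ := fun t => Real.exp ((n:ℝ) * lam * (Ψ (u t) - 1)) with hp
  set e₁ : ℝ → ℝ := fun t => Real.exp ((n:ℝ) * lam * ((Real.exp t - 1) * Ψ₁ (u t))) with he₁
  set e₂ : ℝ → ℝ := fun t => Real.exp ((n:ℝ) * lam * ((Real.exp t - 1) * Ψ₂ (u t))) with he₂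
  set b₁ : ℝ → ℝ := fun t => Real.exp ((n:ℝ) * lam * ((Real.exp t - 1) * w₁)) with hb₁
  set b₂ : ℝ → ℝ := fun t => Real.exp ((n:ℝ) * lam * ((Real.exp t - 1) * w₂)) with hb₂
  have corner := DispersalAux.corner_integral P n lam mu σ f M N model A₁ A₂ B
    hA₁meas hA₂meas hA₁sub hA₂sub hAdisj hBmeas hBbdd
  have hIn : ∀ c₁ c₂ c₃ : ℝ,
      Integrable (fun ω => Real.exp (c₁ * X ω + c₂ * Y ω + c₃ * Z ω)) P :=
    fun c₁ c₂ c₃ => (corner c₁ c₂ c₃).1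
  have hval : ∀ c₁ c₂ c₃ : ℝ,
      ∫ ω, Real.exp (c₁ * X ω + c₂ * Y ω + c₃ * Z ω) ∂P
        = Real.exp ((n:ℝ) * lam * ((Ψ (u c₃) - 1)
            + (Real.exp c₁ - 1) * Ψ₁ (u c₃) + (Real.exp c₂ - 1) * Ψ₂ (u c₃))) :=
    fun c₁ c₂ c₃ => (corner c₁ c₂ c₃).2
  -- values at zero
  have hu0 : u 0 = 0 := by simp [hu]
  have hΨ0 : Ψ 0 = 1 := by
    simp [hΨd, DispersalAux.Psi, Real.volume_Icc]
  have hΨ₁0 : Ψ₁ 0 = w₁ := by simp [hΨ₁d, DispersalAux.Psi, hw₁, measureReal_def]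
  have hΨ₂0 : Ψ₂ 0 = w₂ := by simp [hΨ₂d, DispersalAux.Psi, hw₂, measureReal_def]
  -- corner evaluations in terms of p, e, b
  have hv_ttt : ∀ t : ℝ, ∫ ω, Real.exp (t * X ω + t * Y ω + t * Z ω) ∂P
      = p t * e₁ t * e₂ t := by
    intro t
    rw [hval t t t]
    simp only [hp, he₁, he₂]
    rw [← Real.exp_add, ← Real.exp_add]
    congr 1; ring
  have hv_tt0 : ∀ t : ℝ, ∫ ω, Real.exp (t * X ω + t * Y ω + 0 * Z ω) ∂P
      = b₁ t * b₂ t := by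
    intro t
    rw [hval t t 0, hu0, hΨ0, hΨ₁0, hΨ₂0]
    simp only [hb₁, hb₂]
    rw [← Real.exp_add]
    congr 1; ring
  have hv_t0t : ∀ t : ℝ, ∫ ω, Real.exp (t * X ω + 0 * Y ω + t * Z ω) ∂P
      = p t * e₁ t := by
    intro t
    rw [hval t 0 t]
    simp only [hp, he₁, Real.exp_zero, sub_self, zero_mul, add_zero]
    rw [← Real.exp_add]
    congr 1; ring
  have hv_0tt : ∀ t : ℝ, ∫ ω, Real.exp (0 * X ω + t * Y ω + t * Z ω) ∂P
      = p t * e₂ t := by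
    intro t
    rw [hval 0 t t]
    simp only [hp, he₂, Real.exp_zero, sub_self, zero_mul]
    rw [← Real.exp_add]
    congr 1; ring
  have hv_t00 : ∀ t : ℝ, ∫ ω, Real.exp (t * X ω + 0 * Y ω + 0 * Z ω) ∂P = b₁ t := by
    intro t
    rw [hval t 0 0, hu0, hΨ0, hΨ₁0, hΨ₂0]
    simp only [hb₁, Real.exp_zero, sub_self, zero_mul, add_zero]
    congr 1; ring
  have hv_0t0 : ∀ t : ℝ, ∫ ω, Real.exp (0 * X ω + t * Y ω + 0 * Z ω) ∂P = b₂ t := by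
    intro t
    rw [hval 0 t 0, hu0, hΨ0, hΨ₁0, hΨ₂0]
    simp only [hb₂, Real.exp_zero, sub_self, zero_mul]
    congr 1; ring
  have hv_00t : ∀ t : ℝ, ∫ ω, Real.exp (0 * X ω + 0 * Y ω + t * Z ω) ∂P = p t := by
    intro t
    rw [hval 0 0 t]
    simp only [hp, Real.exp_zero, sub_self, zero_mul, add_zero]
  have hv_000 : ∫ ω, Real.exp (0 * X ω + 0 * Y ω + 0 * Z ω) ∂P = 1 := by
    rw [hval 0 0 0, hu0, hΨ0]
    simp
  -- the integral of the triple product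
  have hprod8 : ∀ t : ℝ,
      ∫ ω, (Real.exp (t * X ω) - 1) * (Real.exp (t * Y ω) - 1) * (Real.exp (t * Z ω) - 1) ∂P
        = p t * e₁ t * e₂ t - b₁ t * b₂ t - p t * e₁ t - p t * e₂ t
            + b₁ t + b₂ t + p t - 1 := by
    intro t
    have hptw : (fun ω => (Real.exp (t * X ω) - 1) * (Real.exp (t * Y ω) - 1)
          * (Real.exp (t * Z ω) - 1))
        = fun ω =>
          (((Real.exp (t * X ω + t * Y ω + t * Z ω) - Real.exp (t * X ω + t * Y ω + 0 * Z ω))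
            - (Real.exp (t * X ω + 0 * Y ω + t * Z ω) - Real.exp (t * X ω + 0 * Y ω + 0 * Z ω)))
          - ((Real.exp (0 * X ω + t * Y ω + t * Z ω) - Real.exp (0 * X ω + t * Y ω + 0 * Z ω))
            - (Real.exp (0 * X ω + 0 * Y ω + t * Z ω)
                - Real.exp (0 * X ω + 0 * Y ω + 0 * Z ω)))) := by
      funext ω
      simp [Real.exp_add]
      ring
    have iA : Integrable (fun ω => Real.exp (t * X ω + t * Y ω + t * Z ω)
        - Real.exp (t * X ω + t * Y ω + 0 * Z ω)) P := (hIn t t t).sub (hIn t t 0)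
    have iB : Integrable (fun ω => Real.exp (t * X ω + 0 * Y ω + t * Z ω)
        - Real.exp (t * X ω + 0 * Y ω + 0 * Z ω)) P := (hIn t 0 t).sub (hIn t 0 0)
    have iC : Integrable (fun ω => Real.exp (0 * X ω + t * Y ω + t * Z ω)
        - Real.exp (0 * X ω + t * Y ω + 0 * Z ω)) P := (hIn 0 t t).sub (hIn 0 t 0)
    have iD : Integrable (fun ω => Real.exp (0 * X ω + 0 * Y ω + t * Z ω)
        - Real.exp (0 * X ω + 0 * Y ω + 0 * Z ω)) P := (hIn 0 0 t).sub (hIn 0 0 0)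
    have iAB : Integrable (fun ω =>
        (Real.exp (t * X ω + t * Y ω + t * Z ω) - Real.exp (t * X ω + t * Y ω + 0 * Z ω))
        - (Real.exp (t * X ω + 0 * Y ω + t * Z ω)
            - Real.exp (t * X ω + 0 * Y ω + 0 * Z ω))) P := iA.sub iB
    have iCD : Integrable (fun ω =>
        (Real.exp (0 * X ω + t * Y ω + t * Z ω) - Real.exp (0 * X ω + t * Y ω + 0 * Z ω))
        - (Real.exp (0 * X ω + 0 * Y ω + t * Z ω)
            - Real.exp (0 * X ω + 0 * Y ω + 0 * Z ω))) P := iC.sub iD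
    rw [hptw, integral_sub iAB iCD, integral_sub iA iB, integral_sub iC iD,
      integral_sub (hIn t t t) (hIn t t 0), integral_sub (hIn t 0 t) (hIn t 0 0),
      integral_sub (hIn 0 t t) (hIn 0 t 0), integral_sub (hIn 0 0 t) (hIn 0 0 0),
      hv_ttt t, hv_tt0 t, hv_t0t t, hv_t00 t, hv_0tt t, hv_0t0 t, hv_00t t, hv_000]
    ring
  -- measurability of X, Y, Z
  have hXm : Measurable X := (model.M_meas A₁ hA₁meas).ennreal_toReal
  have hYm : Measurable Y := (model.M_meas A₂ hA₂meas).ennreal_toReal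
  have hZm : Measurable Z := (model.N_meas B hBmeas).ennreal_toReal
  have hXnn : ∀ ω, 0 ≤ X ω := fun ω => ENNReal.toReal_nonneg
  have hYnn : ∀ ω, 0 ≤ Y ω := fun ω => ENNReal.toReal_nonneg
  have hZnn : ∀ ω, 0 ≤ Z ω := fun ω => ENNReal.toReal_nonneg
  have hsplit3 : ∀ a b c t : ℝ, a * b * c / t ^ 3 = (a / t) * (b / t) * (c / t) := by
    intro a b c t
    rw [div_mul_div_comm, div_mul_div_comm, ← pow_two, ← pow_succ]
  have hIoi : ∀ᶠ t in l, (0:ℝ) < t := by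
    filter_upwards [self_mem_nhdsWithin] with t ht
    exact ht
  -- dominated convergence on the probability space
  have hDCT : Tendsto (fun t => ∫ ω, ((Real.exp (t * X ω) - 1) * (Real.exp (t * Y ω) - 1)
        * (Real.exp (t * Z ω) - 1)) / t ^ 3 ∂P) l
      (nhds (∫ ω, X ω * Y ω * Z ω ∂P)) := by
    apply tendsto_integral_filter_of_dominated_convergence
      (bound := fun ω => Real.exp (2 * X ω + 2 * Y ω + 2 * Z ω))
    · filter_upwards with t
      exact (((((measurable_const.mul hXm).exp.sub measurable_const).mul
        (((measurable_const.mul hYm).exp.sub measurable_const))).mul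
        (((measurable_const.mul hZm).exp.sub measurable_const))).div_const _).aestronglyMeasurable
    · filter_upwards [Ioc_mem_nhdsGT (by norm_num : (0:ℝ) < 1)] with t ht
      refine Eventually.of_forall fun ω => ?_
      have hfac : ∀ x : ℝ, 0 ≤ x →
          0 ≤ (Real.exp (t * x) - 1) / t ∧ (Real.exp (t * x) - 1) / t ≤ Real.exp (2 * x) := by
        intro x hx
        have ht0 : 0 < t := ht.1
        have htx : 0 ≤ t * x := mul_nonneg ht0.le hx
        constructor
        · apply div_nonneg _ ht0.le
          have := Real.one_le_exp htx; linarith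
        · rw [div_le_iff₀ ht0]
          have h1 : Real.exp (t * x) - 1 ≤ (t * x) * Real.exp (t * x) :=
            DispersalAux.exp_sub_one_le
          have h2 : Real.exp (t * x) ≤ Real.exp x := by
            apply Real.exp_le_exp.2
            calc t * x ≤ 1 * x := mul_le_mul_of_nonneg_right ht.2 hx
              _ = x := one_mul x
          have h3 : x ≤ Real.exp x := by
            have := Real.add_one_le_exp x; linarith
          have h4 : (t * x) * Real.exp (t * x) ≤ t * (Real.exp x * Real.exp x) := by
            have : x * Real.exp (t * x) ≤ Real.exp x * Real.exp x := by
              apply mul_le_mul h3 h2 (Real.exp_pos _).le (Real.exp_pos _).le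
            calc (t * x) * Real.exp (t * x) = t * (x * Real.exp (t * x)) := by ring
              _ ≤ t * (Real.exp x * Real.exp x) := mul_le_mul_of_nonneg_left this ht0.le
          have h5 : Real.exp x * Real.exp x = Real.exp (2 * x) := by
            rw [← Real.exp_add]; congr 1; ring
          calc Real.exp (t * x) - 1 ≤ t * (Real.exp x * Real.exp x) := le_trans h1 h4
            _ = Real.exp (2 * x) * t := by rw [h5]; ring
      obtain ⟨hX0, hX1⟩ := hfac (X ω) (hXnn ω)
      obtain ⟨hY0, hY1⟩ := hfac (Y ω) (hYnn ω)
      obtain ⟨hZ0, hZ1⟩ := hfac (Z ω) (hZnn ω)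
      rw [Real.norm_eq_abs, hsplit3, abs_of_nonneg (mul_nonneg (mul_nonneg hX0 hY0) hZ0)]
      calc ((Real.exp (t * X ω) - 1) / t) * ((Real.exp (t * Y ω) - 1) / t)
            * ((Real.exp (t * Z ω) - 1) / t)
          ≤ (Real.exp (2 * X ω) * Real.exp (2 * Y ω)) * Real.exp (2 * Z ω) := by
            apply mul_le_mul _ hZ1 hZ0 (mul_nonneg (Real.exp_pos _).le (Real.exp_pos _).le)
            exact mul_le_mul hX1 hY1 hY0 (Real.exp_pos _).le
        _ = Real.exp (2 * X ω + 2 * Y ω + 2 * Z ω) := by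
            rw [← Real.exp_add, ← Real.exp_add]
    · exact hIn 2 2 2
    · refine Eventually.of_forall fun ω => ?_
      have hone : ∀ x : ℝ, Tendsto (fun t => (Real.exp (t * x) - 1) / t) l (nhds x) := by
        intro x
        apply DispersalAux.exp_ratio_tendsto
        · have h1 : Tendsto (fun t : ℝ => t * x) (nhds 0) (nhds 0) := by
            have := (tendsto_id (x := nhds (0:ℝ))).mul_const x
            simpa using this
          exact h1.mono_left nhdsWithin_le_nhds
        · refine Tendsto.congr' ?_ tendsto_const_nhds
          filter_upwards [hIoi] with t ht
          rw [mul_comm, mul_div_assoc, div_self ht.ne', mul_one]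
      have h3 := ((hone (X ω)).mul (hone (Y ω))).mul (hone (Z ω))
      refine h3.congr fun t => ?_
      rw [hsplit3]
  -- the combined corner expression
  have hcomb : ∀ t : ℝ,
      (∫ ω, ((Real.exp (t * X ω) - 1) * (Real.exp (t * Y ω) - 1)
        * (Real.exp (t * Z ω) - 1)) / t ^ 3 ∂P)
      = (p t * e₁ t * e₂ t - b₁ t * b₂ t - p t * e₁ t - p t * e₂ t
          + b₁ t + b₂ t + p t - 1) / t ^ 3 := by
    intro t
    rw [integral_div, hprod8 t]
  -- limits of the building blocks
  have hq0 := DispersalAux.qB_nonneg (σ := σ) model.sigma_pos model.f_nonneg B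
  have hq1 := DispersalAux.qB_le_one (σ := σ) model.sigma_pos model.f_meas
    model.f_nonneg model.f_prob B
  have hqm := DispersalAux.qB_meas (σ := σ) model.f_meas B
  have hIccfin : volume (Set.Icc (0:ℝ) 1) ≠ ⊤ := by simp [Real.volume_Icc]
  have hA₁fin : volume A₁ ≠ ⊤ :=
    ne_top_of_le_ne_top hIccfin (measure_mono hA₁sub)
  have hA₂fin : volume A₂ ≠ ⊤ :=
    ne_top_of_le_ne_top hIccfin (measure_mono hA₂sub)
  have hΨratio : Tendsto (fun v => (Ψ v - 1) / v) l (nhds Q) := by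
    have h := DispersalAux.ratio_tendsto_integral measurableSet_Icc hIccfin hqm hq0 hq1
    simpa [hΨd, DispersalAux.Psi, hQ, Qker, DispersalAux.qB, Real.volume_Icc] using h
  have hΨ₁ratio : Tendsto (fun v => (Ψ₁ v - w₁) / v) l (nhds Q₁) := by
    have h := DispersalAux.ratio_tendsto_integral hA₁meas hA₁fin hqm hq0 hq1
    simpa [hΨ₁d, DispersalAux.Psi, hQ₁, Qker, DispersalAux.qB, hw₁] using h
  have hΨ₂ratio : Tendsto (fun v => (Ψ₂ v - w₂) / v) l (nhds Q₂) := by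
    have h := DispersalAux.ratio_tendsto_integral hA₂meas hA₂fin hqm hq0 hq1
    simpa [hΨ₂d, DispersalAux.Psi, hQ₂, Qker, DispersalAux.qB, hw₂] using h
  have hupos : ∀ᶠ t in l, 0 < u t := by
    filter_upwards [hIoi] with t ht
    have : (0:ℝ) < Real.exp t - 1 := by
      have := Real.add_one_le_exp t; linarith
    exact mul_pos model.mu_pos this
  have hu_l : Tendsto u l l := by
    rw [hl, tendsto_nhdsWithin_iff]
    constructor
    · have hc : Continuous u := by
        rw [hu]; exact continuous_const.mul (Real.continuous_exp.sub continuous_const)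
      have h0 : Tendsto u (nhds 0) (nhds (u 0)) := hc.tendsto 0
      rw [hu0] at h0
      exact h0.mono_left nhdsWithin_le_nhds
    · filter_upwards [hupos] with t ht
      exact ht
  have hu_0 : Tendsto u l (nhds 0) := hu_l.mono_right nhdsWithin_le_nhds
  have hexp0 : Tendsto (fun t : ℝ => Real.exp t - 1) l (nhds 0) := by
    have h0 : Tendsto (fun t : ℝ => Real.exp t - 1) (nhds 0) (nhds (Real.exp 0 - 1)) :=
      (Real.continuous_exp.sub continuous_const).tendsto 0
    rw [Real.exp_zero, sub_self] at h0
    exact h0.mono_left nhdsWithin_le_nhds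
  have hexp1 : Tendsto (fun t : ℝ => (Real.exp t - 1) / t) l (nhds 1) := by
    apply DispersalAux.exp_ratio_tendsto (δ := fun t => t)
    · exact tendsto_id.mono_right nhdsWithin_le_nhds
    · refine Tendsto.congr' ?_ tendsto_const_nhds
      filter_upwards [hIoi] with t ht
      rw [div_self ht.ne']
  have hut : Tendsto (fun t => u t / t) l (nhds mu) := by
    have h := hexp1.const_mul mu
    rw [mul_one] at h
    refine h.congr fun t => ?_
    rw [hu]; dsimp only; rw [mul_div_assoc]
  have hΨcomp : Tendsto (fun t => (Ψ (u t) - 1) / u t) l (nhds Q) := hΨratio.comp hu_l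
  have hΨ₁comp : Tendsto (fun t => (Ψ₁ (u t) - w₁) / u t) l (nhds Q₁) := hΨ₁ratio.comp hu_l
  have hΨ₂comp : Tendsto (fun t => (Ψ₂ (u t) - w₂) / u t) l (nhds Q₂) := hΨ₂ratio.comp hu_l
  have hΨlim : Tendsto (fun t => Ψ (u t)) l (nhds 1) := by
    have h := (tendsto_const_nhds : Tendsto (fun _ : ℝ => (1:ℝ)) l (nhds 1)).add (hu_0.mul hΨcomp)
    rw [show (1:ℝ) + 0 * Q = 1 by ring] at h
    refine h.congr' ?_
    filter_upwards [hupos] with t ht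
    rw [mul_comm (u t), div_mul_cancel₀ _ ht.ne']
    ring
  have hΨ₁lim : Tendsto (fun t => Ψ₁ (u t)) l (nhds w₁) := by
    have h := (tendsto_const_nhds : Tendsto (fun _ : ℝ => w₁) l (nhds w₁)).add (hu_0.mul hΨ₁comp)
    rw [show w₁ + 0 * Q₁ = w₁ by ring] at h
    refine h.congr' ?_
    filter_upwards [hupos] with t ht
    rw [mul_comm (u t), div_mul_cancel₀ _ ht.ne']
    ring
  have hΨ₂lim : Tendsto (fun t => Ψ₂ (u t)) l (nhds w₂) := by
    have h := (tendsto_const_nhds : Tendsto (fun _ : ℝ => w₂) l (nhds w₂)).add (hu_0.mul hΨ₂comp)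
    rw [show w₂ + 0 * Q₂ = w₂ by ring] at h
    refine h.congr' ?_
    filter_upwards [hupos] with t ht
    rw [mul_comm (u t), div_mul_cancel₀ _ ht.ne']
    ring
  -- limit of (p t - 1)/t
  have h_p : Tendsto (fun t => (p t - 1) / t) l (nhds ((n:ℝ) * lam * Q * mu)) := by
    have hmain : Tendsto (fun t => (Real.exp ((n:ℝ) * lam * (Ψ (u t) - 1)) - 1) / t) l
        (nhds ((n:ℝ) * lam * Q * mu)) := by
      apply DispersalAux.exp_ratio_tendsto
      · have h := (hΨlim.sub_const 1).const_mul ((n:ℝ) * lam)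
        rw [sub_self, mul_zero] at h
        exact h
      · have h := (hΨcomp.const_mul ((n:ℝ) * lam)).mul hut
        refine h.congr' ?_
        filter_upwards [hIoi, hupos] with t ht hut'
        field_simp
    refine hmain.congr fun t => ?_
    rw [hp]
  -- limits of (e_i t - 1)/t, (b_i t - 1)/t
  have h_e₁ : Tendsto (fun t => (e₁ t - 1) / t) l (nhds ((n:ℝ) * lam * w₁)) := by
    have hmain : Tendsto
        (fun t => (Real.exp ((n:ℝ) * lam * ((Real.exp t - 1) * Ψ₁ (u t))) - 1) / t) l
        (nhds ((n:ℝ) * lam * w₁)) := by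
      apply DispersalAux.exp_ratio_tendsto
      · have h := (hexp0.mul hΨ₁lim).const_mul ((n:ℝ) * lam)
        rw [zero_mul, mul_zero] at h
        exact h
      · have h := (hexp1.mul hΨ₁lim).const_mul ((n:ℝ) * lam)
        rw [show (n:ℝ) * lam * (1 * w₁) = (n:ℝ) * lam * w₁ by ring] at h
        refine h.congr fun t => ?_
        ring
    refine hmain.congr fun t => ?_
    rw [he₁]
  have h_e₂ : Tendsto (fun t => (e₂ t - 1) / t) l (nhds ((n:ℝ) * lam * w₂)) := by
    have hmain : Tendsto
        (fun t => (Real.exp ((n:ℝ) * lam * ((Real.exp t - 1) * Ψ₂ (u t))) - 1) / t) l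
        (nhds ((n:ℝ) * lam * w₂)) := by
      apply DispersalAux.exp_ratio_tendsto
      · have h := (hexp0.mul hΨ₂lim).const_mul ((n:ℝ) * lam)
        rw [zero_mul, mul_zero] at h
        exact h
      · have h := (hexp1.mul hΨ₂lim).const_mul ((n:ℝ) * lam)
        rw [show (n:ℝ) * lam * (1 * w₂) = (n:ℝ) * lam * w₂ by ring] at h
        refine h.congr fun t => ?_
        ring
    refine hmain.congr fun t => ?_
    rw [he₂]
  have h_b₁ : Tendsto (fun t => (b₁ t - 1) / t) l (nhds ((n:ℝ) * lam * w₁)) := by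
    have hmain : Tendsto
        (fun t => (Real.exp ((n:ℝ) * lam * ((Real.exp t - 1) * w₁)) - 1) / t) l
        (nhds ((n:ℝ) * lam * w₁)) := by
      apply DispersalAux.exp_ratio_tendsto
      · have h := (hexp0.mul_const w₁).const_mul ((n:ℝ) * lam)
        rw [zero_mul, mul_zero] at h
        exact h
      · have h := (hexp1.mul_const w₁).const_mul ((n:ℝ) * lam)
        rw [show (n:ℝ) * lam * (1 * w₁) = (n:ℝ) * lam * w₁ by ring] at h
        refine h.congr fun t => ?_
        ring
    refine hmain.congr fun t => ?_
    rw [hb₁]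
  have hb₁lim : Tendsto b₁ l (nhds 1) := by
    have harg : Tendsto (fun t => (n:ℝ) * lam * ((Real.exp t - 1) * w₁)) l (nhds 0) := by
      have h := (hexp0.mul_const w₁).const_mul ((n:ℝ) * lam)
      rw [zero_mul, mul_zero] at h
      exact h
    have h := (Real.continuous_exp.tendsto 0).comp harg
    rw [Real.exp_zero] at h
    refine h.congr fun t => ?_
    simp only [hb₁, Function.comp_apply]
  -- limits of (e_i - b_i)/t²
  have h_d₁ : Tendsto (fun t => (e₁ t - b₁ t) / t ^ 2) l
      (nhds ((n:ℝ) * lam * Q₁ * mu)) := by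
    have hδ : Tendsto (fun t =>
        (Real.exp ((n:ℝ) * lam * ((Real.exp t - 1) * (Ψ₁ (u t) - w₁))) - 1) / t ^ 2) l
        (nhds ((n:ℝ) * lam * Q₁ * mu)) := by
      apply DispersalAux.exp_ratio_tendsto
      · have h := (hexp0.mul (hΨ₁lim.sub_const w₁)).const_mul ((n:ℝ) * lam)
        rw [sub_self, zero_mul, mul_zero] at h
        exact h
      · have h := ((hexp1.mul hΨ₁comp).const_mul ((n:ℝ) * lam)).mul hut
        rw [show (n:ℝ) * lam * (1 * Q₁) * mu = (n:ℝ) * lam * Q₁ * mu by ring] at h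
        refine h.congr' ?_
        filter_upwards [hIoi, hupos] with t ht hut'
        field_simp
    have h := hb₁lim.mul hδ
    rw [one_mul] at h
    refine h.congr fun t => ?_
    rw [he₁, hb₁]
    dsimp only
    rw [← mul_div_assoc]
    congr 1
    rw [mul_sub, mul_one, ← Real.exp_add]
    congr 2
    ring
  have h_d₂ : Tendsto (fun t => (e₂ t - b₂ t) / t ^ 2) l
      (nhds ((n:ℝ) * lam * Q₂ * mu)) := by
    have hδ : Tendsto (fun t =>
        (Real.exp ((n:ℝ) * lam * ((Real.exp t - 1) * (Ψ₂ (u t) - w₂))) - 1) / t ^ 2) l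
        (nhds ((n:ℝ) * lam * Q₂ * mu)) := by
      apply DispersalAux.exp_ratio_tendsto
      · have h := (hexp0.mul (hΨ₂lim.sub_const w₂)).const_mul ((n:ℝ) * lam)
        rw [sub_self, zero_mul, mul_zero] at h
        exact h
      · have h := ((hexp1.mul hΨ₂comp).const_mul ((n:ℝ) * lam)).mul hut
        rw [show (n:ℝ) * lam * (1 * Q₂) * mu = (n:ℝ) * lam * Q₂ * mu by ring] at h
        refine h.congr' ?_
        filter_upwards [hIoi, hupos] with t ht hut'
        field_simp
    have hb₂lim : Tendsto b₂ l (nhds 1) := by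
      have harg : Tendsto (fun t => (n:ℝ) * lam * ((Real.exp t - 1) * w₂)) l (nhds 0) := by
        have h := (hexp0.mul_const w₂).const_mul ((n:ℝ) * lam)
        rw [zero_mul, mul_zero] at h
        exact h
      have h := (Real.continuous_exp.tendsto 0).comp harg
      rw [Real.exp_zero] at h
      refine h.congr fun t => ?_
      simp only [hb₂, Function.comp_apply]
    have h := hb₂lim.mul hδ
    rw [one_mul] at h
    refine h.congr fun t => ?_
    rw [he₂, hb₂]
    dsimp only
    rw [← mul_div_assoc]
    congr 1
    rw [mul_sub, mul_one, ← Real.exp_add]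
    congr 2
    ring
  -- the limit of the corner combination
  have hsum : Tendsto (fun t =>
      ((p t - 1) / t) * ((e₁ t - 1) / t) * ((e₂ t - 1) / t)
        + ((e₁ t - b₁ t) / t ^ 2) * ((e₂ t - 1) / t)
        + ((b₁ t - 1) / t) * ((e₂ t - b₂ t) / t ^ 2)) l
      (nhds ((n:ℝ) * lam * Q * mu * ((n:ℝ) * lam * w₁) * ((n:ℝ) * lam * w₂)
        + (n:ℝ) * lam * Q₁ * mu * ((n:ℝ) * lam * w₂)
        + (n:ℝ) * lam * w₁ * ((n:ℝ) * lam * Q₂ * mu))) :=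
    (((h_p.mul h_e₁).mul h_e₂).add (h_d₁.mul h_e₂)).add (h_b₁.mul h_d₂)
  have hRHS : Tendsto (fun t =>
      (p t * e₁ t * e₂ t - b₁ t * b₂ t - p t * e₁ t - p t * e₂ t
        + b₁ t + b₂ t + p t - 1) / t ^ 3) l
      (nhds ((n:ℝ) * lam * Q * mu * ((n:ℝ) * lam * w₁) * ((n:ℝ) * lam * w₂)
        + (n:ℝ) * lam * Q₁ * mu * ((n:ℝ) * lam * w₂)
        + (n:ℝ) * lam * w₁ * ((n:ℝ) * lam * Q₂ * mu))) := by
    refine hsum.congr' ?_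
    filter_upwards [hIoi] with t ht
    have ht' : t ≠ 0 := ht.ne'
    field_simp
    ring
  have hL : Tendsto (fun t =>
      (p t * e₁ t * e₂ t - b₁ t * b₂ t - p t * e₁ t - p t * e₂ t
        + b₁ t + b₂ t + p t - 1) / t ^ 3) l
      (nhds (∫ ω, X ω * Y ω * Z ω ∂P)) :=
    hDCT.congr fun t => hcomb t
  have hfin : ∫ ω, X ω * Y ω * Z ω ∂P
      = (n:ℝ) * lam * Q * mu * ((n:ℝ) * lam * w₁) * ((n:ℝ) * lam * w₂)
        + (n:ℝ) * lam * Q₁ * mu * ((n:ℝ) * lam * w₂)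
        + (n:ℝ) * lam * w₁ * ((n:ℝ) * lam * Q₂ * mu) :=
    tendsto_nhds_unique hL hRHS
  have hgoal : (∫ ω, (M ω A₁).toReal * (M ω A₂).toReal * (N ω B).toReal ∂P)
      = ∫ ω, X ω * Y ω * Z ω ∂P := rfl
  rw [hgoal, hfin]
  ring
end

section
/- If A ⊆ [0,1] is an interval and B₁, B₂ ⊆ ℝ are disjoint bounded intervals, then E[M(A) N(B₁) N(B₂)] = n³λ³μ² |A| Q_σ([0,1],B₁) Q_σ([0,1],B₂) + n²λ²μ² Q_σ(A,B₁) Q_σ([0,1],B₂) + n²λ²μ² Q_σ([0,1],B₁) Q_σ(A,B₂) + n²λ²μ² |A| Q_σ²([0,1],B₁,B₂) + nλμ² Q_σ²(A,B₁,B₂). -/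
open MeasureTheory Filter Set

section Aux

open Real

lemma hasDerivAt_integral_exp {α : Type*} [MeasurableSpace α] (μ : Measure α)
    (w φ : α → ℝ) (hw : Measurable w) (hφ : Measurable φ)
    (hw0 : ∀ x, 0 ≤ w x) (hφ0 : ∀ x, 0 ≤ φ x)
    (hint : ∀ θ : ℝ, Integrable (fun x => w x * Real.exp (θ * φ x)) μ) (θ₀ : ℝ) :
    HasDerivAt (fun θ => ∫ x, w x * Real.exp (θ * φ x) ∂μ)
      (∫ x, w x * φ x * Real.exp (θ₀ * φ x) ∂μ) θ₀ := by
  have key := hasDerivAt_integral_of_dominated_loc_of_deriv_le (μ := μ)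
      (F := fun θ x => w x * Real.exp (θ * φ x))
      (F' := fun θ x => w x * φ x * Real.exp (θ * φ x))
      (bound := fun x => w x * Real.exp ((θ₀ + 2) * φ x)) (x₀ := θ₀) (s := Metric.ball θ₀ 1) (Metric.ball_mem_nhds θ₀ one_pos)
      ?_ (hint θ₀) ?_ ?_ (hint (θ₀ + 2)) ?_
  · exact key.2
  · exact Eventually.of_forall fun θ =>
      (hw.mul ((measurable_const.mul hφ).exp)).aestronglyMeasurable
  · exact ((hw.mul hφ).mul ((measurable_const.mul hφ).exp)).aestronglyMeasurable
  · refine Eventually.of_forall fun x θ hθ => ?_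
    have h1 : |θ - θ₀| < 1 := by simpa [Real.dist_eq] using hθ
    have hθle : θ ≤ θ₀ + 1 := by cases' abs_lt.1 h1 with h h'; linarith
    have h2 : φ x * Real.exp (θ * φ x) ≤ Real.exp ((θ₀ + 2) * φ x) := by
      calc φ x * Real.exp (θ * φ x) ≤ Real.exp (φ x) * Real.exp ((θ₀ + 1) * φ x) := by
            apply mul_le_mul
            · exact (Real.add_one_le_exp (φ x)).trans' (by linarith)
            · exact Real.exp_le_exp.2 (by nlinarith [hφ0 x])
            · positivity
            · positivity
        _ = Real.exp ((θ₀ + 2) * φ x) := by rw [← Real.exp_add]; ring_nf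
    have : ‖w x * φ x * Real.exp (θ * φ x)‖ = w x * (φ x * Real.exp (θ * φ x)) := by
      rw [Real.norm_eq_abs,
        abs_of_nonneg (mul_nonneg (mul_nonneg (hw0 x) (hφ0 x)) (Real.exp_pos _).le), mul_assoc]
    rw [this]
    exact mul_le_mul_of_nonneg_left h2 (hw0 x)
  · refine Eventually.of_forall fun x θ _ => ?_
    have : HasDerivAt (fun θ : ℝ => Real.exp (θ * φ x)) (φ x * Real.exp (θ * φ x)) θ := by
      simpa [mul_comm] using ((hasDerivAt_id θ).mul_const (φ x)).exp
    simpa [mul_assoc, mul_comm, mul_left_comm] using this.const_mul (w x)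

lemma fdil_meas {σ : ℝ} {f : ℝ → ℝ} (hf : Measurable f) : Measurable (fdil σ f) :=
  (hf.comp (measurable_id.div_const σ)).const_mul _

lemma fdil_nonneg {σ : ℝ} {f : ℝ → ℝ} (hσ : 0 < σ) (hf0 : ∀ z, 0 ≤ f z) (z : ℝ) :
    0 ≤ fdil σ f z :=
  mul_nonneg (inv_nonneg.2 hσ.le) (hf0 _)

lemma f_integrable {f : ℝ → ℝ} (h1 : ∫ z, f z = 1) : Integrable f := by
  by_contra h
  rw [integral_undef h] at h1; norm_num at h1

lemma fdil_integrable {σ : ℝ} {f : ℝ → ℝ} (hσ : 0 < σ) (h1 : ∫ z, f z = 1) :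
    Integrable (fdil σ f) :=
  ((f_integrable h1).comp_div hσ.ne').const_mul _

lemma fdil_integral {σ : ℝ} {f : ℝ → ℝ} (hσ : 0 < σ) (h1 : ∫ z, f z = 1) :
    ∫ z, fdil σ f z = 1 := by
  have : ∫ z, fdil σ f z = σ⁻¹ * ∫ z, f (z / σ) := by
    simpa [fdil] using integral_const_mul (μ := volume) σ⁻¹ (fun z => f (z / σ))
  rw [this, MeasureTheory.Measure.integral_comp_div f σ, h1, abs_of_pos hσ]
  simp [smul_eq_mul, inv_mul_cancel₀ hσ.ne']

lemma qfun_meas {σ : ℝ} {f : ℝ → ℝ} (hf : Measurable f) (B : Set ℝ) :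
    Measurable fun x => ∫ y in B, fdil σ f (y - x) := by
  have : StronglyMeasurable fun p : ℝ × ℝ => fdil σ f (p.2 - p.1) :=
    ((fdil_meas hf).comp (measurable_snd.sub measurable_fst)).stronglyMeasurable
  exact (StronglyMeasurable.integral_prod_right' (ν := volume.restrict B) this).measurable

lemma qfun_nonneg {σ : ℝ} {f : ℝ → ℝ} (hσ : 0 < σ) (hf0 : ∀ z, 0 ≤ f z) {B : Set ℝ}
    (hB : MeasurableSet B) (x : ℝ) : 0 ≤ ∫ y in B, fdil σ f (y - x) :=
  setIntegral_nonneg hB fun y _ => fdil_nonneg hσ hf0 _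

lemma qfun_le_one {σ : ℝ} {f : ℝ → ℝ} (hσ : 0 < σ) (hf : Measurable f) (hf0 : ∀ z, 0 ≤ f z)
    (h1 : ∫ z, f z = 1) (B : Set ℝ) (x : ℝ) : (∫ y in B, fdil σ f (y - x)) ≤ 1 := by
  have hint : Integrable fun y => fdil σ f (y - x) :=
    (fdil_integrable hσ h1).comp_sub_right x
  calc (∫ y in B, fdil σ f (y - x)) ≤ ∫ y, fdil σ f (y - x) :=
        setIntegral_le_integral hint (ae_of_all _ fun y => fdil_nonneg hσ hf0 _)
    _ = ∫ z, fdil σ f z := integral_sub_right_eq_self _ x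
    _ = 1 := fdil_integral hσ h1

lemma integrableOn_of_bounded'' {S : Set ℝ} (hfin : volume S ≠ ⊤) {g : ℝ → ℝ}
    (hg : Measurable g) {C : ℝ} (hC : ∀ x, |g x| ≤ C) : IntegrableOn g S := by
  haveI : IsFiniteMeasure (volume.restrict S) :=
    ⟨by rwa [Measure.restrict_apply_univ, lt_top_iff_ne_top]⟩
  exact (integrable_const C).mono' hg.aestronglyMeasurable (ae_of_all _ hC)

lemma mul_le_abs_of_unit {t u : ℝ} (h0 : 0 ≤ u) (h1 : u ≤ 1) : t * u ≤ |t| :=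
  ((mul_le_mul_of_nonneg_right (le_abs_self t) h0).trans
    (by nlinarith [abs_nonneg t]))

end Aux

section Core

variable {Ω : Type*} [MeasurableSpace Ω] {P : Measure Ω}
  {n : ℕ} {lam mu σ : ℝ} {f : ℝ → ℝ} {M N : Ω → Measure ℝ}
  {A B₁ B₂ : Set ℝ}

set_option maxHeartbeats 1000000 in
lemma laplaceE (model : IsDispersalModel P n lam mu σ f M N)
    (hAmeas : MeasurableSet A) (hAsub : A ⊆ Set.Icc (0:ℝ) 1)
    (hB₁meas : MeasurableSet B₁) (hB₂meas : MeasurableSet B₂)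
    (hB₁bdd : Bornology.IsBounded B₁) (hB₂bdd : Bornology.IsBounded B₂)
    (hBdisj : Disjoint B₁ B₂) (a b c : ℝ) :
    ∫ ω, Real.exp (a * (M ω A).toReal + b * (N ω B₁).toReal + c * (N ω B₂).toReal) ∂P
      = Real.exp ((n : ℝ) * lam *
          ((∫ x in Set.Icc (0:ℝ) 1,
            Real.exp (a * A.indicator (fun _ => (1:ℝ)) x
              + mu * (Real.exp b - 1) * (∫ y in B₁, fdil σ f (y - x))
              + mu * (Real.exp c - 1) * (∫ y in B₂, fdil σ f (y - x)))) - 1)) := by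
  have hσ := model.sigma_pos
  set g : ℝ → ℝ := A.indicator (fun _ => a) with hg_def
  set h : ℝ → ℝ := fun y => B₁.indicator (fun _ => b) y + B₂.indicator (fun _ => c) y
    with hh_def
  have hgm : Measurable g := measurable_const.indicator hAmeas
  have hhm : Measurable h :=
    (measurable_const.indicator hB₁meas).add (measurable_const.indicator hB₂meas)
  have hgb : ∃ c', ∀ x, |g x| ≤ c' := by
    refine ⟨|a|, fun x => ?_⟩
    by_cases hx : x ∈ A <;> simp [hg_def, indicator_of_mem, indicator_of_notMem, hx]
  have hhb : ∃ c', ∀ y, |h y| ≤ c' := by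
    refine ⟨|b| + |c|, fun y => (abs_add_le _ _).trans (add_le_add ?_ ?_)⟩
    · by_cases hy : y ∈ B₁ <;> simp [indicator_of_mem, indicator_of_notMem, hy]
    · by_cases hy : y ∈ B₂ <;> simp [indicator_of_mem, indicator_of_notMem, hy]
  have hsupp : ∃ R, ∀ y : ℝ, R < |y| → h y = 0 := by
    obtain ⟨R, hR⟩ := (hB₁bdd.union hB₂bdd).subset_closedBall 0
    refine ⟨R, fun y hy => ?_⟩
    have hyn : y ∉ B₁ ∪ B₂ := fun hmem => by
      have := hR hmem
      rw [Metric.mem_closedBall, Real.dist_eq, sub_zero] at this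
      linarith
    have h1 : y ∉ B₁ := fun hh => hyn (Or.inl hh)
    have h2 : y ∉ B₂ := fun hh => hyn (Or.inr hh)
    simp [hh_def, indicator_of_notMem, h1, h2]
  have L := model.laplace g h hgm hhm hgb hhb hsupp
  -- LHS transformation
  have hLHS : ∀ ω, (∫ x, g x ∂(M ω)) + (∫ y, h y ∂(N ω))
      = a * (M ω A).toReal + b * (N ω B₁).toReal + c * (N ω B₂).toReal := by
    intro ω
    have h1 : (∫ x, g x ∂(M ω)) = (M ω A).toReal * a := by
      rw [hg_def, integral_indicator_const a hAmeas, smul_eq_mul, measureReal_def]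
    have i1 : Integrable (B₁.indicator fun _ => b) (N ω) :=
      (integrable_indicator_iff hB₁meas).2
        (integrableOn_const (model.N_locFinite ω B₁ hB₁bdd).ne)
    have i2 : Integrable (B₂.indicator fun _ => c) (N ω) :=
      (integrable_indicator_iff hB₂meas).2
        (integrableOn_const (model.N_locFinite ω B₂ hB₂bdd).ne)
    have h2 : (∫ y, h y ∂(N ω))
        = (N ω B₁).toReal * b + (N ω B₂).toReal * c := by
      rw [hh_def]
      rw [integral_add i1 i2, integral_indicator_const b hB₁meas,
        integral_indicator_const c hB₂meas, smul_eq_mul, smul_eq_mul, measureReal_def, measureReal_def]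
    rw [h1, h2]; ring
  -- RHS inner integral
  have hInner : ∀ x : ℝ, (∫ y, (Real.exp (h y) - 1) * fdil σ f (y - x))
      = (Real.exp b - 1) * (∫ y in B₁, fdil σ f (y - x))
        + (Real.exp c - 1) * (∫ y in B₂, fdil σ f (y - x)) := by
    intro x
    have hfint : Integrable fun y => fdil σ f (y - x) :=
      (fdil_integrable hσ model.f_prob).comp_sub_right x
    have hpt : ∀ y, (Real.exp (h y) - 1) * fdil σ f (y - x)
        = (Real.exp b - 1) * B₁.indicator (fun y => fdil σ f (y - x)) y
          + (Real.exp c - 1) * B₂.indicator (fun y => fdil σ f (y - x)) y := by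
      intro y
      by_cases h1 : y ∈ B₁
      · have h2 : y ∉ B₂ := fun h2 => (hBdisj.ne_of_mem h1 h2) rfl
        simp [hh_def, indicator_of_mem, indicator_of_notMem, h1, h2]
      · by_cases h2 : y ∈ B₂
        · simp [hh_def, indicator_of_mem, indicator_of_notMem, h1, h2]
        · simp [hh_def, indicator_of_notMem, h1, h2]
    rw [integral_congr_ae (ae_of_all _ hpt),
      integral_add (((hfint.indicator hB₁meas).const_mul _))
        (((hfint.indicator hB₂meas).const_mul _)),
      integral_const_mul, integral_const_mul,
      integral_indicator hB₁meas, integral_indicator hB₂meas]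
  -- put together
  calc ∫ ω, Real.exp (a * (M ω A).toReal + b * (N ω B₁).toReal + c * (N ω B₂).toReal) ∂P
      = ∫ ω, Real.exp ((∫ x, g x ∂(M ω)) + ∫ y, h y ∂(N ω)) ∂P := by
        refine integral_congr_ae (ae_of_all _ fun ω => ?_)
        dsimp only
        rw [hLHS ω]
    _ = Real.exp ((n : ℝ) * lam * ∫ x in Set.Icc (0:ℝ) 1,
          (Real.exp (g x + mu * ∫ y, (Real.exp (h y) - 1) * fdil σ f (y - x)) - 1)) := L
    _ = Real.exp ((n : ℝ) * lam *
          ((∫ x in Set.Icc (0:ℝ) 1,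
            Real.exp (a * A.indicator (fun _ => (1:ℝ)) x
              + mu * (Real.exp b - 1) * (∫ y in B₁, fdil σ f (y - x))
              + mu * (Real.exp c - 1) * (∫ y in B₂, fdil σ f (y - x)))) - 1)) := by
        congr 1
        have hptx : ∀ x : ℝ,
            (Real.exp (g x + mu * ∫ y, (Real.exp (h y) - 1) * fdil σ f (y - x)) - 1)
            = Real.exp (a * A.indicator (fun _ => (1:ℝ)) x
              + mu * (Real.exp b - 1) * (∫ y in B₁, fdil σ f (y - x))
              + mu * (Real.exp c - 1) * (∫ y in B₂, fdil σ f (y - x))) - 1 := by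
          intro x
          rw [hInner x]
          congr 2
          have hgx : g x = a * A.indicator (fun _ => (1:ℝ)) x := by
            by_cases hx : x ∈ A <;>
              simp [hg_def, indicator_of_mem, indicator_of_notMem, hx]
          rw [hgx]; ring
        rw [setIntegral_congr_fun measurableSet_Icc (fun x _ => hptx x)]
        have hq₁m := qfun_meas (σ := σ) model.f_meas B₁
        have hq₂m := qfun_meas (σ := σ) model.f_meas B₂
        have hEm : Measurable fun x : ℝ => Real.exp (a * A.indicator (fun _ => (1:ℝ)) x
              + mu * (Real.exp b - 1) * (∫ y in B₁, fdil σ f (y - x))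
              + mu * (Real.exp c - 1) * (∫ y in B₂, fdil σ f (y - x))) :=
          ((((measurable_const.indicator hAmeas).const_mul a).add
            (hq₁m.const_mul _)).add (hq₂m.const_mul _)).exp
        have hbnd : ∀ x : ℝ, |Real.exp (a * A.indicator (fun _ => (1:ℝ)) x
              + mu * (Real.exp b - 1) * (∫ y in B₁, fdil σ f (y - x))
              + mu * (Real.exp c - 1) * (∫ y in B₂, fdil σ f (y - x)))|
            ≤ Real.exp (|a| + |mu * (Real.exp b - 1)| + |mu * (Real.exp c - 1)|) := by
          intro x
          rw [abs_of_pos (Real.exp_pos _)]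
          apply Real.exp_le_exp.2
          have t1 : a * A.indicator (fun _ => (1:ℝ)) x ≤ |a| :=
            mul_le_abs_of_unit (Set.indicator_nonneg (fun _ _ => zero_le_one) x) (by
              by_cases hx : x ∈ A <;>
                simp [indicator_of_mem, indicator_of_notMem, hx])
          have t2 : mu * (Real.exp b - 1) * (∫ y in B₁, fdil σ f (y - x))
              ≤ |mu * (Real.exp b - 1)| :=
            mul_le_abs_of_unit (qfun_nonneg hσ model.f_nonneg hB₁meas x)
              (qfun_le_one hσ model.f_meas model.f_nonneg model.f_prob B₁ x)
          have t3 : mu * (Real.exp c - 1) * (∫ y in B₂, fdil σ f (y - x))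
              ≤ |mu * (Real.exp c - 1)| :=
            mul_le_abs_of_unit (qfun_nonneg hσ model.f_nonneg hB₂meas x)
              (qfun_le_one hσ model.f_meas model.f_nonneg model.f_prob B₂ x)
          linarith
        have hIfin : volume (Set.Icc (0:ℝ) 1) ≠ ⊤ := by simp
        have hEint : IntegrableOn (fun x : ℝ => Real.exp (a * A.indicator (fun _ => (1:ℝ)) x
              + mu * (Real.exp b - 1) * (∫ y in B₁, fdil σ f (y - x))
              + mu * (Real.exp c - 1) * (∫ y in B₂, fdil σ f (y - x))))
            (Set.Icc (0:ℝ) 1) := integrableOn_of_bounded'' hIfin hEm hbnd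
        rw [integral_sub hEint (integrableOn_const (by simp))]
        congr 1
        simp

lemma intE (model : IsDispersalModel P n lam mu σ f M N)
    (hAmeas : MeasurableSet A) (hAsub : A ⊆ Set.Icc (0:ℝ) 1)
    (hB₁meas : MeasurableSet B₁) (hB₂meas : MeasurableSet B₂)
    (hB₁bdd : Bornology.IsBounded B₁) (hB₂bdd : Bornology.IsBounded B₂)
    (hBdisj : Disjoint B₁ B₂) (a b c : ℝ) :
    Integrable (fun ω =>
      Real.exp (a * (M ω A).toReal + b * (N ω B₁).toReal + c * (N ω B₂).toReal)) P := by
  by_contra hcon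
  have h := laplaceE model hAmeas hAsub hB₁meas hB₂meas hB₁bdd hB₂bdd hBdisj a b c
  rw [integral_undef hcon] at h
  exact (Real.exp_pos _).ne' h.symm

lemma round1 (model : IsDispersalModel P n lam mu σ f M N)
    (hAmeas : MeasurableSet A) (hAsub : A ⊆ Set.Icc (0:ℝ) 1)
    (hB₁meas : MeasurableSet B₁) (hB₂meas : MeasurableSet B₂)
    (hB₁bdd : Bornology.IsBounded B₁) (hB₂bdd : Bornology.IsBounded B₂)
    (hBdisj : Disjoint B₁ B₂) (a b : ℝ) :
    ∫ ω, Real.exp (a * (M ω A).toReal + b * (N ω B₁).toReal) * (N ω B₂).toReal ∂P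
      = Real.exp ((n : ℝ) * lam *
          ((∫ x in Set.Icc (0:ℝ) 1,
            Real.exp (a * A.indicator (fun _ => (1:ℝ)) x
              + mu * (Real.exp b - 1) * (∫ y in B₁, fdil σ f (y - x)))) - 1))
        * ((n : ℝ) * lam *
          ((∫ x in Set.Icc (0:ℝ) 1,
            Real.exp (a * A.indicator (fun _ => (1:ℝ)) x
              + mu * (Real.exp b - 1) * (∫ y in B₁, fdil σ f (y - x)))
            * (∫ y in B₂, fdil σ f (y - x))) * mu)) := by
  have hσ := model.sigma_pos
  set q₁ : ℝ → ℝ := fun x => ∫ y in B₁, fdil σ f (y - x) with hq₁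
  set q₂ : ℝ → ℝ := fun x => ∫ y in B₂, fdil σ f (y - x) with hq₂
  have hq₁m : Measurable q₁ := qfun_meas model.f_meas B₁
  have hq₂m : Measurable q₂ := qfun_meas model.f_meas B₂
  have hq₂0 : ∀ x, 0 ≤ q₂ x := fun x => qfun_nonneg hσ model.f_nonneg hB₂meas x
  have hq₂1 : ∀ x, q₂ x ≤ 1 := fun x => qfun_le_one hσ model.f_meas model.f_nonneg model.f_prob B₂ x
  -- probabilistic side
  set w : Ω → ℝ := fun ω => Real.exp (a * (M ω A).toReal + b * (N ω B₁).toReal) with hw_def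
  set φ : Ω → ℝ := fun ω => (N ω B₂).toReal with hφ_def
  have hwm : Measurable w :=
    (((model.M_meas A hAmeas).ennreal_toReal.const_mul a).add
      ((model.N_meas B₁ hB₁meas).ennreal_toReal.const_mul b)).exp
  have hφm : Measurable φ := (model.N_meas B₂ hB₂meas).ennreal_toReal
  have hint : ∀ θ : ℝ, Integrable (fun ω => w ω * Real.exp (θ * φ ω)) P := by
    intro θ
    have heq : (fun ω => w ω * Real.exp (θ * φ ω))
        = fun ω => Real.exp (a * (M ω A).toReal + b * (N ω B₁).toReal + θ * (N ω B₂).toReal) :=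
      funext fun ω => by rw [hw_def, ← Real.exp_add]
    rw [heq]
    exact intE model hAmeas hAsub hB₁meas hB₂meas hB₁bdd hB₂bdd hBdisj a b θ
  have hprob := hasDerivAt_integral_exp P w φ hwm hφm (fun ω => (Real.exp_pos _).le)
    (fun ω => ENNReal.toReal_nonneg) hint 0
  have hfun : (fun c => ∫ ω, w ω * Real.exp (c * φ ω) ∂P)
      = fun c => Real.exp ((n : ℝ) * lam *
          ((∫ x in Set.Icc (0:ℝ) 1,
            Real.exp (a * A.indicator (fun _ => (1:ℝ)) x
              + mu * (Real.exp b - 1) * q₁ x + mu * (Real.exp c - 1) * q₂ x)) - 1)) := by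
    funext c
    have heq : (fun ω => w ω * Real.exp (c * φ ω))
        = fun ω => Real.exp (a * (M ω A).toReal + b * (N ω B₁).toReal + c * (N ω B₂).toReal) :=
      funext fun ω => by rw [hw_def, ← Real.exp_add]
    rw [heq]
    exact laplaceE model hAmeas hAsub hB₁meas hB₂meas hB₁bdd hB₂bdd hBdisj a b c
  rw [hfun] at hprob
  -- explicit side
  set W : ℝ → ℝ := fun x => Real.exp (a * A.indicator (fun _ => (1:ℝ)) x
      + mu * (Real.exp b - 1) * q₁ x) with hW_def
  have hWm : Measurable W :=
    (((measurable_const.indicator hAmeas).const_mul a).add (hq₁m.const_mul _)).exp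
  have hW0 : ∀ x, 0 ≤ W x := fun x => (Real.exp_pos _).le
  have hWb : ∀ x, W x ≤ Real.exp (|a| + |mu * (Real.exp b - 1)|) := by
    intro x
    apply Real.exp_le_exp.2
    have t1 : a * A.indicator (fun _ => (1:ℝ)) x ≤ |a| :=
      mul_le_abs_of_unit (Set.indicator_nonneg (fun _ _ => zero_le_one) x) (by
        by_cases hx : x ∈ A <;> simp [indicator_of_mem, indicator_of_notMem, hx])
    have t2 : mu * (Real.exp b - 1) * q₁ x ≤ |mu * (Real.exp b - 1)| :=
      mul_le_abs_of_unit (qfun_nonneg hσ model.f_nonneg hB₁meas x)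
        (qfun_le_one hσ model.f_meas model.f_nonneg model.f_prob B₁ x)
    linarith
  have hIfin : volume (Set.Icc (0:ℝ) 1) ≠ ⊤ := by simp
  have hintx : ∀ θ : ℝ, Integrable (fun x => W x * Real.exp (θ * q₂ x))
      (volume.restrict (Set.Icc (0:ℝ) 1)) := by
    intro θ
    apply integrableOn_of_bounded'' hIfin (hWm.mul ((measurable_const.mul hq₂m).exp))
      (C := Real.exp (|a| + |mu * (Real.exp b - 1)|) * Real.exp |θ|)
    intro x
    simp only [Pi.mul_apply]
    rw [abs_of_nonneg (mul_nonneg (hW0 x) (Real.exp_pos _).le)]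
    exact mul_le_mul (hWb x) (Real.exp_le_exp.2 (mul_le_abs_of_unit (hq₂0 x) (hq₂1 x)))
      (Real.exp_pos _).le (Real.exp_pos _).le
  have hx := hasDerivAt_integral_exp (volume.restrict (Set.Icc (0:ℝ) 1)) W q₂ hWm hq₂m hW0
    hq₂0 hintx 0
  have hγ : HasDerivAt (fun c : ℝ => mu * (Real.exp c - 1)) mu 0 := by
    simpa using ((Real.hasDerivAt_exp 0).sub_const 1).const_mul mu
  have hx' : HasDerivAt (fun γ => ∫ x in Set.Icc (0:ℝ) 1, W x * Real.exp (γ * q₂ x))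
      (∫ x in Set.Icc (0:ℝ) 1, W x * q₂ x * Real.exp (0 * q₂ x))
      ((fun c : ℝ => mu * (Real.exp c - 1)) 0) := by simpa using hx
  have hcomp := HasDerivAt.comp (0:ℝ) hx' hγ
  have hfun2 : ((fun γ => ∫ x in Set.Icc (0:ℝ) 1, W x * Real.exp (γ * q₂ x))
        ∘ (fun c : ℝ => mu * (Real.exp c - 1)))
      = fun c => ∫ x in Set.Icc (0:ℝ) 1,
          W x * Real.exp ((mu * (Real.exp c - 1)) * q₂ x) := rfl
  rw [hfun2] at hcomp
  have hchain := ((hcomp.sub_const 1).const_mul ((n:ℝ) * lam)).exp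
  have hinner : ∀ c : ℝ, (∫ x in Set.Icc (0:ℝ) 1,
        W x * Real.exp ((mu * (Real.exp c - 1)) * q₂ x))
      = ∫ x in Set.Icc (0:ℝ) 1,
          Real.exp (a * A.indicator (fun _ => (1:ℝ)) x
            + mu * (Real.exp b - 1) * q₁ x + mu * (Real.exp c - 1) * q₂ x) := by
    intro c
    refine setIntegral_congr_fun measurableSet_Icc (fun x _ => ?_)
    simp only [hW_def]
    rw [← Real.exp_add]
  have hfeq : (fun c => Real.exp ((n:ℝ) * lam * ((∫ x in Set.Icc (0:ℝ) 1,
        W x * Real.exp ((mu * (Real.exp c - 1)) * q₂ x)) - 1)))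
      = fun c => Real.exp ((n : ℝ) * lam *
          ((∫ x in Set.Icc (0:ℝ) 1,
            Real.exp (a * A.indicator (fun _ => (1:ℝ)) x
              + mu * (Real.exp b - 1) * q₁ x + mu * (Real.exp c - 1) * q₂ x)) - 1)) := by
    funext c; rw [hinner c]
  rw [hfeq] at hchain
  have key := hprob.unique hchain
  have hgoalL : ∫ ω, Real.exp (a * (M ω A).toReal + b * (N ω B₁).toReal)
        * (N ω B₂).toReal ∂P = ∫ ω, w ω * φ ω * Real.exp (0 * φ ω) ∂P :=
    integral_congr_ae (ae_of_all _ fun ω => by simp [hw_def, hφ_def])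
  rw [hgoalL, key]
  simp only [Real.exp_zero, mul_one, zero_mul, mul_zero, sub_zero, Real.exp_zero]
  simp only [hW_def, hq₁, hq₂]
  norm_num

set_option maxHeartbeats 1000000 in
lemma round2 (model : IsDispersalModel P n lam mu σ f M N)
    (hAmeas : MeasurableSet A) (hAsub : A ⊆ Set.Icc (0:ℝ) 1)
    (hB₁meas : MeasurableSet B₁) (hB₂meas : MeasurableSet B₂)
    (hB₁bdd : Bornology.IsBounded B₁) (hB₂bdd : Bornology.IsBounded B₂)
    (hBdisj : Disjoint B₁ B₂) (a : ℝ) :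
    ∫ ω, Real.exp (a * (M ω A).toReal) * (N ω B₁).toReal * (N ω B₂).toReal ∂P
      = Real.exp ((n : ℝ) * lam *
          ((∫ x in Set.Icc (0:ℝ) 1,
            Real.exp (a * A.indicator (fun _ => (1:ℝ)) x)) - 1))
        * ((n : ℝ) * lam * mu * mu *
            (∫ x in Set.Icc (0:ℝ) 1,
              (∫ y in B₁, fdil σ f (y - x)) * (∫ y in B₂, fdil σ f (y - x))
                * Real.exp (a * A.indicator (fun _ => (1:ℝ)) x))
          + ((n : ℝ) * lam * mu *
              ∫ x in Set.Icc (0:ℝ) 1,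
                (∫ y in B₁, fdil σ f (y - x)) * Real.exp (a * A.indicator (fun _ => (1:ℝ)) x))
            * ((n : ℝ) * lam * mu *
              ∫ x in Set.Icc (0:ℝ) 1,
                (∫ y in B₂, fdil σ f (y - x)) * Real.exp (a * A.indicator (fun _ => (1:ℝ)) x))) := by
  have hσ := model.sigma_pos
  have hq₁m : Measurable fun x : ℝ => ∫ y in B₁, fdil σ f (y - x) := qfun_meas model.f_meas B₁
  have hq₂m : Measurable fun x : ℝ => ∫ y in B₂, fdil σ f (y - x) := qfun_meas model.f_meas B₂
  have hq₁0 : ∀ x : ℝ, 0 ≤ ∫ y in B₁, fdil σ f (y - x) :=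
    fun x => qfun_nonneg hσ model.f_nonneg hB₁meas x
  have hq₁1 : ∀ x : ℝ, (∫ y in B₁, fdil σ f (y - x)) ≤ 1 :=
    fun x => qfun_le_one hσ model.f_meas model.f_nonneg model.f_prob B₁ x
  have hq₂0 : ∀ x : ℝ, 0 ≤ ∫ y in B₂, fdil σ f (y - x) :=
    fun x => qfun_nonneg hσ model.f_nonneg hB₂meas x
  have hq₂1 : ∀ x : ℝ, (∫ y in B₂, fdil σ f (y - x)) ≤ 1 :=
    fun x => qfun_le_one hσ model.f_meas model.f_nonneg model.f_prob B₂ x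
  -- probabilistic side
  set w : Ω → ℝ := fun ω => Real.exp (a * (M ω A).toReal) * (N ω B₂).toReal with hw_def
  set φ : Ω → ℝ := fun ω => (N ω B₁).toReal with hφ_def
  have hwm : Measurable w :=
    (((model.M_meas A hAmeas).ennreal_toReal.const_mul a).exp).mul
      ((model.N_meas B₂ hB₂meas).ennreal_toReal)
  have hφm : Measurable φ := (model.N_meas B₁ hB₁meas).ennreal_toReal
  have hw0 : ∀ ω, 0 ≤ w ω := fun ω => mul_nonneg (Real.exp_pos _).le ENNReal.toReal_nonneg
  have hint : ∀ θ : ℝ, Integrable (fun ω => w ω * Real.exp (θ * φ ω)) P := by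
    intro θ
    refine (intE model hAmeas hAsub hB₁meas hB₂meas hB₁bdd hB₂bdd hBdisj a θ 1).mono'
      ((hwm.mul ((measurable_const.mul hφm).exp)).aestronglyMeasurable)
      (ae_of_all _ fun ω => ?_)
    rw [Real.norm_eq_abs, abs_of_nonneg (mul_nonneg (hw0 ω) (Real.exp_pos _).le)]
    have hN2 : (N ω B₂).toReal ≤ Real.exp (N ω B₂).toReal := by
      have := Real.add_one_le_exp ((N ω B₂).toReal); linarith
    calc w ω * Real.exp (θ * φ ω)
        = (Real.exp (a * (M ω A).toReal) * Real.exp (θ * (N ω B₁).toReal))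
            * (N ω B₂).toReal := by rw [hw_def]; ring
      _ ≤ (Real.exp (a * (M ω A).toReal) * Real.exp (θ * (N ω B₁).toReal))
            * Real.exp (N ω B₂).toReal := by
          exact mul_le_mul_of_nonneg_left hN2 (by positivity)
      _ = Real.exp (a * (M ω A).toReal + θ * (N ω B₁).toReal + 1 * (N ω B₂).toReal) := by
          rw [← Real.exp_add, ← Real.exp_add]; congr 1; ring
  have hprob := hasDerivAt_integral_exp P w φ hwm hφm hw0
    (fun ω => ENNReal.toReal_nonneg) hint 0
  have hfun : (fun b => ∫ ω, w ω * Real.exp (b * φ ω) ∂P)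
      = fun b => Real.exp ((n : ℝ) * lam *
          ((∫ x in Set.Icc (0:ℝ) 1,
            Real.exp (a * A.indicator (fun _ => (1:ℝ)) x
              + mu * (Real.exp b - 1) * (∫ y in B₁, fdil σ f (y - x)))) - 1))
        * ((n : ℝ) * lam *
          ((∫ x in Set.Icc (0:ℝ) 1,
            Real.exp (a * A.indicator (fun _ => (1:ℝ)) x
              + mu * (Real.exp b - 1) * (∫ y in B₁, fdil σ f (y - x)))
            * (∫ y in B₂, fdil σ f (y - x))) * mu)) := by
    funext b
    have heq : (fun ω => w ω * Real.exp (b * φ ω))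
        = fun ω => Real.exp (a * (M ω A).toReal + b * (N ω B₁).toReal)
            * (N ω B₂).toReal :=
      funext fun ω => by rw [hw_def]; dsimp only; rw [Real.exp_add]; ring
    rw [heq]
    exact round1 model hAmeas hAsub hB₁meas hB₂meas hB₁bdd hB₂bdd hBdisj a b
  rw [hfun] at hprob
  -- explicit side: the two factors as functions of b
  have hIfin : volume (Set.Icc (0:ℝ) 1) ≠ ⊤ := by simp
  have hw₀m : Measurable fun x : ℝ => Real.exp (a * A.indicator (fun _ => (1:ℝ)) x) :=
    ((measurable_const.indicator hAmeas).const_mul a).exp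
  have hw₀b : ∀ x : ℝ, Real.exp (a * A.indicator (fun _ => (1:ℝ)) x) ≤ Real.exp |a| := by
    intro x
    apply Real.exp_le_exp.2
    exact mul_le_abs_of_unit (Set.indicator_nonneg (fun _ _ => zero_le_one) x) (by
      by_cases hx : x ∈ A <;> simp [indicator_of_mem, indicator_of_notMem, hx])
  have hγ : HasDerivAt (fun b : ℝ => mu * (Real.exp b - 1)) mu 0 := by
    simpa using ((Real.hasDerivAt_exp 0).sub_const 1).const_mul mu
  -- derivative of b ↦ ∫_I w₀ e^{β(b) q₁} type integrals, for weight u (u = w₀ or w₀·q₂)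
  have hgen : ∀ u : ℝ → ℝ, Measurable u → (∀ x, 0 ≤ u x) → (∀ x, u x ≤ Real.exp |a|) →
      HasDerivAt (fun b : ℝ => ∫ x in Set.Icc (0:ℝ) 1,
          u x * Real.exp ((mu * (Real.exp b - 1)) * (∫ y in B₁, fdil σ f (y - x))))
        ((∫ x in Set.Icc (0:ℝ) 1, u x * (∫ y in B₁, fdil σ f (y - x))
            * Real.exp ((0:ℝ) * (∫ y in B₁, fdil σ f (y - x)))) * mu) 0 := by
    intro u hum hu0 hub
    have hintu : ∀ θ : ℝ, Integrable
        (fun x => u x * Real.exp (θ * (∫ y in B₁, fdil σ f (y - x))))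
        (volume.restrict (Set.Icc (0:ℝ) 1)) := by
      intro θ
      apply integrableOn_of_bounded'' hIfin (hum.mul ((measurable_const.mul hq₁m).exp))
        (C := Real.exp |a| * Real.exp |θ|)
      intro x
      simp only [Pi.mul_apply]
      rw [abs_of_nonneg (mul_nonneg (hu0 x) (Real.exp_pos _).le)]
      exact mul_le_mul (hub x) (Real.exp_le_exp.2 (mul_le_abs_of_unit (hq₁0 x) (hq₁1 x)))
        (Real.exp_pos _).le (Real.exp_pos _).le
    have hx := hasDerivAt_integral_exp (volume.restrict (Set.Icc (0:ℝ) 1)) u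
      (fun x => ∫ y in B₁, fdil σ f (y - x)) hum hq₁m hu0 hq₁0 hintu 0
    have hx' : HasDerivAt (fun γ => ∫ x in Set.Icc (0:ℝ) 1,
          u x * Real.exp (γ * (∫ y in B₁, fdil σ f (y - x))))
        (∫ x in Set.Icc (0:ℝ) 1, u x * (∫ y in B₁, fdil σ f (y - x))
            * Real.exp ((0:ℝ) * (∫ y in B₁, fdil σ f (y - x))))
        ((fun b : ℝ => mu * (Real.exp b - 1)) 0) := by simpa using hx
    exact HasDerivAt.comp (0:ℝ) hx' hγ
  have hXinner := hgen _ hw₀m (fun x => (Real.exp_pos _).le) hw₀b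
  have hYinner := hgen (fun x => Real.exp (a * A.indicator (fun _ => (1:ℝ)) x)
      * (∫ y in B₂, fdil σ f (y - x)))
    (hw₀m.mul hq₂m) (fun x => mul_nonneg (Real.exp_pos _).le (hq₂0 x))
    (fun x => by
      calc Real.exp (a * A.indicator (fun _ => (1:ℝ)) x) * (∫ y in B₂, fdil σ f (y - x))
          ≤ Real.exp (a * A.indicator (fun _ => (1:ℝ)) x) * 1 :=
            mul_le_mul_of_nonneg_left (hq₂1 x) (Real.exp_pos _).le
        _ ≤ Real.exp |a| := by rw [mul_one]; exact hw₀b x)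
  -- identify integrands with those appearing in hfun
  have hXeq : ∀ b : ℝ, (∫ x in Set.Icc (0:ℝ) 1,
        Real.exp (a * A.indicator (fun _ => (1:ℝ)) x)
          * Real.exp ((mu * (Real.exp b - 1)) * (∫ y in B₁, fdil σ f (y - x))))
      = ∫ x in Set.Icc (0:ℝ) 1,
          Real.exp (a * A.indicator (fun _ => (1:ℝ)) x
            + mu * (Real.exp b - 1) * (∫ y in B₁, fdil σ f (y - x))) := fun b =>
    setIntegral_congr_fun measurableSet_Icc (fun x _ => by rw [← Real.exp_add])
  have hYeq : ∀ b : ℝ, (∫ x in Set.Icc (0:ℝ) 1,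
        (Real.exp (a * A.indicator (fun _ => (1:ℝ)) x) * (∫ y in B₂, fdil σ f (y - x)))
          * Real.exp ((mu * (Real.exp b - 1)) * (∫ y in B₁, fdil σ f (y - x))))
      = ∫ x in Set.Icc (0:ℝ) 1,
          Real.exp (a * A.indicator (fun _ => (1:ℝ)) x
            + mu * (Real.exp b - 1) * (∫ y in B₁, fdil σ f (y - x)))
            * (∫ y in B₂, fdil σ f (y - x)) := fun b =>
    setIntegral_congr_fun measurableSet_Icc (fun x _ => by rw [Real.exp_add]; ring)
  have hX : HasDerivAt (fun b : ℝ => Real.exp ((n : ℝ) * lam *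
        ((∫ x in Set.Icc (0:ℝ) 1,
          Real.exp (a * A.indicator (fun _ => (1:ℝ)) x
            + mu * (Real.exp b - 1) * (∫ y in B₁, fdil σ f (y - x)))) - 1)))
      (Real.exp ((n : ℝ) * lam *
        ((∫ x in Set.Icc (0:ℝ) 1,
          Real.exp (a * A.indicator (fun _ => (1:ℝ)) x
            + mu * (Real.exp 0 - 1) * (∫ y in B₁, fdil σ f (y - x)))) - 1))
        * ((n : ℝ) * lam * ((∫ x in Set.Icc (0:ℝ) 1,
            Real.exp (a * A.indicator (fun _ => (1:ℝ)) x) * (∫ y in B₁, fdil σ f (y - x))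
              * Real.exp ((0:ℝ) * (∫ y in B₁, fdil σ f (y - x)))) * mu))) 0 := by
    have h1 := ((hXinner.sub_const 1).const_mul ((n:ℝ) * lam)).exp
    have hfeq : (fun b : ℝ => Real.exp ((n:ℝ) * lam * (((fun b : ℝ =>
          ∫ x in Set.Icc (0:ℝ) 1, Real.exp (a * A.indicator (fun _ => (1:ℝ)) x)
            * Real.exp ((mu * (Real.exp b - 1)) * (∫ y in B₁, fdil σ f (y - x)))) b) - 1)))
        = fun b : ℝ => Real.exp ((n : ℝ) * lam *
            ((∫ x in Set.Icc (0:ℝ) 1,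
              Real.exp (a * A.indicator (fun _ => (1:ℝ)) x
                + mu * (Real.exp b - 1) * (∫ y in B₁, fdil σ f (y - x)))) - 1)) := by
      funext b; dsimp only; rw [hXeq b]
    rw [hfeq] at h1
    convert h1 using 2
    rw [← hXeq 0]
  have hY : HasDerivAt (fun b : ℝ => (n : ℝ) * lam *
        ((∫ x in Set.Icc (0:ℝ) 1,
          Real.exp (a * A.indicator (fun _ => (1:ℝ)) x
            + mu * (Real.exp b - 1) * (∫ y in B₁, fdil σ f (y - x)))
          * (∫ y in B₂, fdil σ f (y - x))) * mu))
      ((n : ℝ) * lam * (((∫ x in Set.Icc (0:ℝ) 1,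
          (Real.exp (a * A.indicator (fun _ => (1:ℝ)) x) * (∫ y in B₂, fdil σ f (y - x)))
            * (∫ y in B₁, fdil σ f (y - x))
            * Real.exp ((0:ℝ) * (∫ y in B₁, fdil σ f (y - x)))) * mu) * mu)) 0 := by
    have h2 := (hYinner.mul_const mu).const_mul ((n:ℝ) * lam)
    have hfeq : (fun b : ℝ => (n:ℝ) * lam * (((fun b : ℝ =>
          ∫ x in Set.Icc (0:ℝ) 1,
            (Real.exp (a * A.indicator (fun _ => (1:ℝ)) x) * (∫ y in B₂, fdil σ f (y - x)))
              * Real.exp ((mu * (Real.exp b - 1)) * (∫ y in B₁, fdil σ f (y - x)))) b) * mu))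
        = fun b : ℝ => (n : ℝ) * lam *
            ((∫ x in Set.Icc (0:ℝ) 1,
              Real.exp (a * A.indicator (fun _ => (1:ℝ)) x
                + mu * (Real.exp b - 1) * (∫ y in B₁, fdil σ f (y - x)))
              * (∫ y in B₂, fdil σ f (y - x))) * mu) := by
      funext b; dsimp only; rw [hYeq b]
    rw [hfeq] at h2
    convert h2 using 2
  have key := hprob.unique (hX.mul hY)
  have hgoalL : ∫ ω, Real.exp (a * (M ω A).toReal) * (N ω B₁).toReal * (N ω B₂).toReal ∂P
      = ∫ ω, w ω * φ ω * Real.exp (0 * φ ω) ∂P :=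
    integral_congr_ae (ae_of_all _ fun ω => by rw [hw_def]; dsimp only; simp; ring)
  rw [hgoalL, key]
  simp only [Real.exp_zero, sub_self, mul_zero, zero_mul, mul_one, add_zero]
  have c1 : (∫ x in Set.Icc (0:ℝ) 1,
        Real.exp (a * A.indicator (fun _ => (1:ℝ)) x) * (∫ y in B₁, fdil σ f (y - x)))
      = ∫ x in Set.Icc (0:ℝ) 1,
        (∫ y in B₁, fdil σ f (y - x)) * Real.exp (a * A.indicator (fun _ => (1:ℝ)) x) :=
    setIntegral_congr_fun measurableSet_Icc (fun x _ => by ring)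
  have c2 : (∫ x in Set.Icc (0:ℝ) 1,
        Real.exp (a * A.indicator (fun _ => (1:ℝ)) x) * (∫ y in B₂, fdil σ f (y - x)))
      = ∫ x in Set.Icc (0:ℝ) 1,
        (∫ y in B₂, fdil σ f (y - x)) * Real.exp (a * A.indicator (fun _ => (1:ℝ)) x) :=
    setIntegral_congr_fun measurableSet_Icc (fun x _ => by ring)
  have c3 : (∫ x in Set.Icc (0:ℝ) 1,
        Real.exp (a * A.indicator (fun _ => (1:ℝ)) x) * (∫ y in B₂, fdil σ f (y - x))
          * (∫ y in B₁, fdil σ f (y - x)))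
      = ∫ x in Set.Icc (0:ℝ) 1,
        (∫ y in B₁, fdil σ f (y - x)) * (∫ y in B₂, fdil σ f (y - x))
          * Real.exp (a * A.indicator (fun _ => (1:ℝ)) x) :=
    setIntegral_congr_fun measurableSet_Icc (fun x _ => by ring)
  rw [c1, c2, c3]
  ring

end Core

set_option maxHeartbeats 1000000 in
/-- Lemma 16(iii): mixed third moment `E[M(A)N(B₁)N(B₂)]`. -/
theorem dispersal_third_moment_MNN
    {Ω : Type*} [MeasurableSpace Ω] (P : Measure Ω)
    (n : ℕ) (lam mu σ : ℝ) (f : ℝ → ℝ) (M N : Ω → Measure ℝ)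
    (model : IsDispersalModel P n lam mu σ f M N)
    (A B₁ B₂ : Set ℝ)
    (hAmeas : MeasurableSet A) (hAint : A.OrdConnected) (hAsub : A ⊆ Set.Icc (0:ℝ) 1)
    (hB₁meas : MeasurableSet B₁) (hB₂meas : MeasurableSet B₂)
    (hB₁int : B₁.OrdConnected) (hB₂int : B₂.OrdConnected)
    (hB₁bdd : Bornology.IsBounded B₁) (hB₂bdd : Bornology.IsBounded B₂)
    (hBdisj : Disjoint B₁ B₂) :
    ∫ ω, (M ω A).toReal * (N ω B₁).toReal * (N ω B₂).toReal ∂P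
      = (n : ℝ)^3 * lam^3 * mu^2 * (volume A).toReal
          * Qker σ f (Set.Icc (0:ℝ) 1) B₁ * Qker σ f (Set.Icc (0:ℝ) 1) B₂
        + (n : ℝ)^2 * lam^2 * mu^2 * Qker σ f A B₁ * Qker σ f (Set.Icc (0:ℝ) 1) B₂
        + (n : ℝ)^2 * lam^2 * mu^2 * Qker σ f (Set.Icc (0:ℝ) 1) B₁ * Qker σ f A B₂
        + (n : ℝ)^2 * lam^2 * mu^2 * (volume A).toReal * Q2ker σ f (Set.Icc (0:ℝ) 1) B₁ B₂
        + (n : ℝ) * lam * mu^2 * Q2ker σ f A B₁ B₂ := by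
  have hσ := model.sigma_pos
  have hq₁m : Measurable fun x : ℝ => ∫ y in B₁, fdil σ f (y - x) := qfun_meas model.f_meas B₁
  have hq₂m : Measurable fun x : ℝ => ∫ y in B₂, fdil σ f (y - x) := qfun_meas model.f_meas B₂
  have hq₁0 : ∀ x : ℝ, 0 ≤ ∫ y in B₁, fdil σ f (y - x) :=
    fun x => qfun_nonneg hσ model.f_nonneg hB₁meas x
  have hq₁1 : ∀ x : ℝ, (∫ y in B₁, fdil σ f (y - x)) ≤ 1 :=
    fun x => qfun_le_one hσ model.f_meas model.f_nonneg model.f_prob B₁ x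
  have hq₂0 : ∀ x : ℝ, 0 ≤ ∫ y in B₂, fdil σ f (y - x) :=
    fun x => qfun_nonneg hσ model.f_nonneg hB₂meas x
  have hq₂1 : ∀ x : ℝ, (∫ y in B₂, fdil σ f (y - x)) ≤ 1 :=
    fun x => qfun_le_one hσ model.f_meas model.f_nonneg model.f_prob B₂ x
  -- probabilistic side
  set w : Ω → ℝ := fun ω => (N ω B₁).toReal * (N ω B₂).toReal with hw_def
  set φ : Ω → ℝ := fun ω => (M ω A).toReal with hφ_def
  have hwm : Measurable w :=
    ((model.N_meas B₁ hB₁meas).ennreal_toReal).mul ((model.N_meas B₂ hB₂meas).ennreal_toReal)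
  have hφm : Measurable φ := (model.M_meas A hAmeas).ennreal_toReal
  have hw0 : ∀ ω, 0 ≤ w ω := fun ω => mul_nonneg ENNReal.toReal_nonneg ENNReal.toReal_nonneg
  have hint : ∀ θ : ℝ, Integrable (fun ω => w ω * Real.exp (θ * φ ω)) P := by
    intro θ
    refine (intE model hAmeas hAsub hB₁meas hB₂meas hB₁bdd hB₂bdd hBdisj θ 1 1).mono'
      ((hwm.mul ((measurable_const.mul hφm).exp)).aestronglyMeasurable)
      (ae_of_all _ fun ω => ?_)
    rw [Real.norm_eq_abs, abs_of_nonneg (mul_nonneg (hw0 ω) (Real.exp_pos _).le)]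
    have hN1 : (N ω B₁).toReal ≤ Real.exp (N ω B₁).toReal := by
      have := Real.add_one_le_exp ((N ω B₁).toReal); linarith
    have hN2 : (N ω B₂).toReal ≤ Real.exp (N ω B₂).toReal := by
      have := Real.add_one_le_exp ((N ω B₂).toReal); linarith
    calc w ω * Real.exp (θ * φ ω)
        = (N ω B₁).toReal * (N ω B₂).toReal * Real.exp (θ * (M ω A).toReal) := by rw [hw_def]
      _ ≤ Real.exp (N ω B₁).toReal * Real.exp (N ω B₂).toReal
            * Real.exp (θ * (M ω A).toReal) := by
          apply mul_le_mul_of_nonneg_right _ (Real.exp_pos _).le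
          exact mul_le_mul hN1 hN2 ENNReal.toReal_nonneg (Real.exp_pos _).le
      _ = Real.exp (θ * (M ω A).toReal + 1 * (N ω B₁).toReal + 1 * (N ω B₂).toReal) := by
          rw [← Real.exp_add, ← Real.exp_add]; congr 1; ring
  have hprob := hasDerivAt_integral_exp P w φ hwm hφm hw0
    (fun ω => ENNReal.toReal_nonneg) hint 0
  have hfun : (fun a => ∫ ω, w ω * Real.exp (a * φ ω) ∂P)
      = fun a => Real.exp ((n : ℝ) * lam *
          ((∫ x in Set.Icc (0:ℝ) 1,
            Real.exp (a * A.indicator (fun _ => (1:ℝ)) x)) - 1))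
        * ((n : ℝ) * lam * mu * mu *
            (∫ x in Set.Icc (0:ℝ) 1,
              (∫ y in B₁, fdil σ f (y - x)) * (∫ y in B₂, fdil σ f (y - x))
                * Real.exp (a * A.indicator (fun _ => (1:ℝ)) x))
          + ((n : ℝ) * lam * mu *
              ∫ x in Set.Icc (0:ℝ) 1,
                (∫ y in B₁, fdil σ f (y - x)) * Real.exp (a * A.indicator (fun _ => (1:ℝ)) x))
            * ((n : ℝ) * lam * mu *
              ∫ x in Set.Icc (0:ℝ) 1,
                (∫ y in B₂, fdil σ f (y - x))
                  * Real.exp (a * A.indicator (fun _ => (1:ℝ)) x))) := by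
    funext a
    have heq : (fun ω => w ω * Real.exp (a * φ ω))
        = fun ω => Real.exp (a * (M ω A).toReal) * (N ω B₁).toReal * (N ω B₂).toReal :=
      funext fun ω => by rw [hw_def]; dsimp only; ring
    rw [heq]
    exact round2 model hAmeas hAsub hB₁meas hB₂meas hB₁bdd hB₂bdd hBdisj a
  rw [hfun] at hprob
  -- explicit side
  have hIfin : volume (Set.Icc (0:ℝ) 1) ≠ ⊤ := by simp
  have hgen3 : ∀ u : ℝ → ℝ, Measurable u → (∀ x, 0 ≤ u x) → (∀ x, u x ≤ 1) →
      HasDerivAt (fun a : ℝ => ∫ x in Set.Icc (0:ℝ) 1,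
          u x * Real.exp (a * A.indicator (fun _ => (1:ℝ)) x))
        (∫ x in Set.Icc (0:ℝ) 1, u x * A.indicator (fun _ => (1:ℝ)) x
            * Real.exp ((0:ℝ) * A.indicator (fun _ => (1:ℝ)) x)) 0 := by
    intro u hum hu0 hub
    have hintu : ∀ θ : ℝ, Integrable
        (fun x => u x * Real.exp (θ * A.indicator (fun _ => (1:ℝ)) x))
        (volume.restrict (Set.Icc (0:ℝ) 1)) := by
      intro θ
      apply integrableOn_of_bounded'' hIfin
        (hum.mul ((measurable_const.mul (measurable_const.indicator hAmeas)).exp))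
        (C := 1 * Real.exp |θ|)
      intro x
      simp only [Pi.mul_apply]
      rw [abs_of_nonneg (mul_nonneg (hu0 x) (Real.exp_pos _).le)]
      refine mul_le_mul (hub x) (Real.exp_le_exp.2 (mul_le_abs_of_unit
        (Set.indicator_nonneg (fun _ _ => zero_le_one) x) ?_)) (Real.exp_pos _).le zero_le_one
      by_cases hx : x ∈ A <;> simp [indicator_of_mem, indicator_of_notMem, hx]
    exact hasDerivAt_integral_exp (volume.restrict (Set.Icc (0:ℝ) 1)) u
      (A.indicator (fun _ => (1:ℝ))) hum (measurable_const.indicator hAmeas) hu0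
      (Set.indicator_nonneg (fun _ _ => zero_le_one)) hintu 0
  have h0 := hgen3 (fun _ => 1) measurable_const (fun _ => zero_le_one) (fun _ => le_refl 1)
  have h12 := hgen3 (fun x => (∫ y in B₁, fdil σ f (y - x)) * (∫ y in B₂, fdil σ f (y - x)))
    (hq₁m.mul hq₂m) (fun x => mul_nonneg (hq₁0 x) (hq₂0 x))
    (fun x => mul_le_one₀ (hq₁1 x) (hq₂0 x) (hq₂1 x))
  have h1 := hgen3 (fun x => ∫ y in B₁, fdil σ f (y - x)) hq₁m hq₁0 hq₁1
  have h2 := hgen3 (fun x => ∫ y in B₂, fdil σ f (y - x)) hq₂m hq₂0 hq₂1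
  have c0 : (fun a : ℝ => ∫ x in Set.Icc (0:ℝ) 1,
        (fun _ : ℝ => (1:ℝ)) x * Real.exp (a * A.indicator (fun _ => (1:ℝ)) x))
      = fun a : ℝ => ∫ x in Set.Icc (0:ℝ) 1,
          Real.exp (a * A.indicator (fun _ => (1:ℝ)) x) := by
    funext a
    exact setIntegral_congr_fun measurableSet_Icc (fun x _ => one_mul _)
  rw [c0] at h0
  have hX3 := ((h0.sub_const 1).const_mul ((n:ℝ) * lam)).exp
  have hsum := ((h12.const_mul ((n:ℝ) * lam * mu * mu)).add
    ((h1.const_mul ((n:ℝ) * lam * mu)).mul (h2.const_mul ((n:ℝ) * lam * mu))))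
  have key := hprob.unique (hX3.mul hsum)
  have hgoalL : ∫ ω, (M ω A).toReal * (N ω B₁).toReal * (N ω B₂).toReal ∂P
      = ∫ ω, w ω * φ ω * Real.exp (0 * φ ω) ∂P :=
    integral_congr_ae (ae_of_all _ fun ω => by rw [hw_def]; dsimp only; simp; ring)
  rw [hgoalL, key]
  -- cleanup and evaluation at 0
  simp only [Real.exp_zero, sub_self, mul_zero, zero_mul, mul_one, add_zero, one_mul]
  have hindc : ∀ u : ℝ → ℝ,
      (∫ x in Set.Icc (0:ℝ) 1, u x * A.indicator (fun _ => (1:ℝ)) x) = ∫ x in A, u x := by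
    intro u
    have hpt : ∀ x, u x * A.indicator (fun _ => (1:ℝ)) x = A.indicator u x := by
      intro x; by_cases hx : x ∈ A <;> simp [indicator_of_mem, indicator_of_notMem, hx]
    rw [setIntegral_congr_fun measurableSet_Icc (fun x _ => hpt x), integral_indicator hAmeas,
      Measure.restrict_restrict hAmeas, inter_eq_self_of_subset_left hAsub]
  have e1 : (∫ x in Set.Icc (0:ℝ) 1, (1:ℝ)) = 1 := by simp
  have e2 : (∫ x in Set.Icc (0:ℝ) 1, A.indicator (fun _ => (1:ℝ)) x)
      = (volume A).toReal := by
    rw [integral_indicator hAmeas, Measure.restrict_restrict hAmeas,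
      inter_eq_self_of_subset_left hAsub]
    simp [measureReal_def]
  have eQ2 : ∀ S : Set ℝ, MeasurableSet S →
      (∫ x in S, (∫ y in B₁, fdil σ f (y - x)) * ∫ y in B₂, fdil σ f (y - x))
        = Q2ker σ f S B₁ B₂ := by
    intro S hS
    rw [Q2ker]
    refine setIntegral_congr_fun hS (fun x _ => ?_)
    have h2 : ∀ y₁ : ℝ, (∫ y₂ in B₂, fdil σ f (y₁ - x) * fdil σ f (y₂ - x))
        = fdil σ f (y₁ - x) * ∫ y₂ in B₂, fdil σ f (y₂ - x) := fun y₁ =>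
      integral_const_mul _ _
    rw [integral_congr_ae (ae_of_all _ h2), integral_mul_const]
  rw [e1, hindc, hindc, hindc, e2, eQ2 _ measurableSet_Icc, eQ2 _ hAmeas]
  have qk1I : (∫ x in Set.Icc (0:ℝ) 1, ∫ y in B₁, fdil σ f (y - x))
      = Qker σ f (Set.Icc (0:ℝ) 1) B₁ := rfl
  have qk2I : (∫ x in Set.Icc (0:ℝ) 1, ∫ y in B₂, fdil σ f (y - x))
      = Qker σ f (Set.Icc (0:ℝ) 1) B₂ := rfl
  have qk1A : (∫ x in A, ∫ y in B₁, fdil σ f (y - x)) = Qker σ f A B₁ := rfl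
  have qk2A : (∫ x in A, ∫ y in B₂, fdil σ f (y - x)) = Qker σ f A B₂ := rfl
  rw [qk1I, qk2I, qk1A, qk2A]
  simp only [sub_self, mul_zero, Real.exp_zero]
  ring
end
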